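/- arXiv:1806.10644 — 3 statements merged into one kernel-verified Lean document; each statement's English description precedes it below -/
import Mathlib

section
/- Every continuous scalar piecewise affine function f : ℝ^{n_x} → ℝ can be written as the difference of two convex piecewise affine functions, i.e., there exist finitely many affine functions γ_1, …, γ_{r_γ} and η_1, …, η_{r_η} from ℝ^{n_x} to ℝ such that f(x) = max_{i=1,…,r_γ} γ_i(x) − max_{j=1,…,r_η} η_j(x) for all x ∈ ℝ^{n_x}. -/
open Finset Matrix

/-- The affine map `x ↦ W x + b`. -/
def affineMapVec {m n : ℕ} (W : Matrix (Fin m) (Fin n) ℝ) (b : Fin m → ℝ)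
    (x : Fin n → ℝ) : Fin m → ℝ :=
  fun i => (∑ j, W i j * x j) + b i

/-- Componentwise rectifier (ReLU). -/
def reluVec {n : ℕ} (v : Fin n → ℝ) : Fin n → ℝ := fun i => max 0 (v i)

/-- Parameters θ of a feed-forward ReLU network with `L ≥ 1` hidden layers of width `M`,
input dimension `nx` and output dimension `nu`:  the first hidden layer `(W1, b1)`,
the `L - 1` remaining hidden layers `(W l, b l)`, and the output layer `(Wout, bout)`. -/
structure ReLUNetParams (nx nu M L : ℕ) where
  W1 : Matrix (Fin M) (Fin nx) ℝ
  b1 : Fin M → ℝ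
  W : Fin (L - 1) → Matrix (Fin M) (Fin M) ℝ
  b : Fin (L - 1) → Fin M → ℝ
  Wout : Matrix (Fin nu) (Fin M) ℝ
  bout : Fin nu → ℝ

/-- The function `N(·; θ, M, L) = f_{L+1} ∘ g_L ∘ f_L ∘ ⋯ ∘ g_1 ∘ f_1` computed by the
ReLU network with parameters `θ`. -/
def ReLUNetParams.eval {nx nu M L : ℕ} (p : ReLUNetParams nx nu M L)
    (x : Fin nx → ℝ) : Fin nu → ℝ :=
  affineMapVec p.Wout p.bout <|
    (List.finRange (L - 1)).foldl
      (fun ξ l => reluVec (affineMapVec (p.W l) (p.b l) ξ))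
      (reluVec (affineMapVec p.W1 p.b1 x))

/-- A polyhedron `{x | Z x ≤ z}`. -/
def IsPolyhedron {n : ℕ} (S : Set (Fin n → ℝ)) : Prop :=
  ∃ (m : ℕ) (Z : Matrix (Fin m) (Fin n) ℝ) (z : Fin m → ℝ),
    S = {x | ∀ i, (∑ j, Z i j * x j) ≤ z i}

/-- `f` is piecewise affine on `D`: finitely many polyhedra with pairwise disjoint
interiors whose union is `D`, with `f` affine on each. -/
def IsPWAOn {n m : ℕ} (D : Set (Fin n → ℝ)) (f : (Fin n → ℝ) → Fin m → ℝ) : Prop :=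
  ∃ (r : ℕ) (R : Fin r → Set (Fin n → ℝ))
    (K : Fin r → Matrix (Fin m) (Fin n) ℝ) (g : Fin r → Fin m → ℝ),
    (∀ i, IsPolyhedron (R i)) ∧
    (∀ i j, i ≠ j → interior (R i) ∩ interior (R j) = ∅) ∧
    (⋃ i, R i) = D ∧
    (∀ i, ∀ x ∈ R i, f x = affineMapVec (K i) (g i) x)

/-- Scalar-valued piecewise affine function on `D`. -/
def IsPWAOnScalar {n : ℕ} (D : Set (Fin n → ℝ)) (f : (Fin n → ℝ) → ℝ) : Prop :=
  ∃ (r : ℕ) (R : Fin r → Set (Fin n → ℝ)) (a : Fin r → Fin n → ℝ) (c : Fin r → ℝ),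
    (∀ i, IsPolyhedron (R i)) ∧
    (∀ i j, i ≠ j → interior (R i) ∩ interior (R j) = ∅) ∧
    (⋃ i, R i) = D ∧
    (∀ i, ∀ x ∈ R i, f x = (∑ j, a i j * x j) + c i)

/-- `f` agrees with some affine function on the set `S`. -/
def AffineOnSet {n m : ℕ} (f : (Fin n → ℝ) → Fin m → ℝ) (S : Set (Fin n → ℝ)) : Prop :=
  ∃ (A : Matrix (Fin m) (Fin n) ℝ) (b : Fin m → ℝ), ∀ x ∈ S, f x = affineMapVec A b x

/-- A linear region of `f`: a nonempty open connected set on which `f` is affine,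
maximal with this property. -/
def IsLinearRegion {n m : ℕ} (f : (Fin n → ℝ) → Fin m → ℝ) (S : Set (Fin n → ℝ)) : Prop :=
  S.Nonempty ∧ IsOpen S ∧ IsConnected S ∧ AffineOnSet f S ∧
    ∀ S', IsOpen S' → IsConnected S' → S ⊂ S' → ¬ AffineOnSet f S'

/-- Maximum of a nonempty finite family of reals. -/
noncomputable def finMax {N : ℕ} (hN : 0 < N) (g : Fin N → ℝ) : ℝ :=
  Finset.univ.sup' (Finset.univ_nonempty_iff.mpr (Fin.pos_iff_nonempty.mp hN)) g

/-- The unit hypercube `[0,1]^n`. -/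
def unitCube (n : ℕ) : Set (Fin n → ℝ) := {x | ∀ i, 0 ≤ x i ∧ x i ≤ 1}


section Aux

variable {ι : Type*}

lemma sup'_add_const (s : Finset ι) (hs : s.Nonempty) (g : ι → ℝ) (c : ℝ) :
    s.sup' hs (fun i => g i + c) = s.sup' hs g + c := by
  apply le_antisymm
  · exact Finset.sup'_le _ _ fun i hi => add_le_add_left (Finset.le_sup' g hi) c
  · obtain ⟨i, hi, hie⟩ := Finset.exists_mem_eq_sup' hs g
    rw [hie]
    exact Finset.le_sup' (fun i => g i + c) hi

lemma sup'_const_sub (s : Finset ι) (hs : s.Nonempty) (g : ι → ℝ) (c : ℝ) :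
    s.sup' hs (fun i => c - g i) = c - s.inf' hs g := by
  apply le_antisymm
  · exact Finset.sup'_le _ _ fun i hi => sub_le_sub_left (Finset.inf'_le g hi) c
  · obtain ⟨i, hi, hie⟩ := Finset.exists_mem_eq_inf' hs g
    rw [hie]
    exact Finset.le_sup' (fun i => c - g i) hi

lemma sup'_prod_add {κ : Type*} (s : Finset ι) (t : Finset κ) (hs : s.Nonempty)
    (ht : t.Nonempty) (u : ι → ℝ) (v : κ → ℝ) :
    (s ×ˢ t).sup' (hs.product ht) (fun p => u p.1 + v p.2) = s.sup' hs u + t.sup' ht v := by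
  apply le_antisymm
  · refine Finset.sup'_le _ _ fun p hp => ?_
    rw [Finset.mem_product] at hp
    exact add_le_add (Finset.le_sup' u hp.1) (Finset.le_sup' v hp.2)
  · obtain ⟨i, hi, hie⟩ := Finset.exists_mem_eq_sup' hs u
    obtain ⟨j, hj, hje⟩ := Finset.exists_mem_eq_sup' ht v
    rw [hie, hje]
    exact Finset.le_sup' (f := fun p => u p.1 + v p.2) (Finset.mem_product.mpr ⟨hi, hj⟩ : (i, j) ∈ s ×ˢ t)

variable {nx : ℕ}

/-- Pointwise max of finitely many affine functions, given by a nonempty finset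
of (slope, offset) pairs. -/
def IsMaxAff (φ : (Fin nx → ℝ) → ℝ) : Prop :=
  ∃ (P : Finset ((Fin nx → ℝ) × ℝ)) (hP : P.Nonempty),
    ∀ x, φ x = P.sup' hP (fun p => (∑ j, p.1 j * x j) + p.2)

lemma IsMaxAff.congr {φ ψ : (Fin nx → ℝ) → ℝ} (h : IsMaxAff φ) (he : ∀ x, ψ x = φ x) :
    IsMaxAff ψ := by
  obtain ⟨P, hP, hPe⟩ := h
  exact ⟨P, hP, fun x => (he x).trans (hPe x)⟩

lemma isMaxAff_affine (a : Fin nx → ℝ) (c : ℝ) :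
    IsMaxAff (fun x => (∑ j, a j * x j) + c) := by
  refine ⟨{(a, c)}, Finset.singleton_nonempty _, fun x => ?_⟩
  simp

lemma isMaxAff_zero : IsMaxAff (fun _ : Fin nx → ℝ => (0 : ℝ)) := by
  have := isMaxAff_affine (fun _ : Fin nx => (0:ℝ)) 0
  simpa using this

lemma IsMaxAff.add {φ ψ : (Fin nx → ℝ) → ℝ} (hφ : IsMaxAff φ) (hψ : IsMaxAff ψ) :
    IsMaxAff (fun x => φ x + ψ x) := by
  classical
  obtain ⟨P, hP, hPe⟩ := hφ
  obtain ⟨Q, hQ, hQe⟩ := hψ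
  refine ⟨(P ×ˢ Q).image (fun pq => (pq.1.1 + pq.2.1, pq.1.2 + pq.2.2)),
    (hP.product hQ).image _, fun x => ?_⟩
  show φ x + ψ x = _
  rw [Finset.sup'_image]
  have : ∀ pq : ((Fin nx → ℝ) × ℝ) × ((Fin nx → ℝ) × ℝ),
      ((fun p : (Fin nx → ℝ) × ℝ => (∑ j, p.1 j * x j) + p.2) ∘
        (fun pq => (pq.1.1 + pq.2.1, pq.1.2 + pq.2.2))) pq
      = ((∑ j, pq.1.1 j * x j) + pq.1.2) + ((∑ j, pq.2.1 j * x j) + pq.2.2) := by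
    intro pq
    simp only [Function.comp, Pi.add_apply]
    rw [show (∑ j, (pq.1.1 j + pq.2.1 j) * x j)
        = (∑ j, pq.1.1 j * x j) + ∑ j, pq.2.1 j * x j by
      rw [← Finset.sum_add_distrib]; exact Finset.sum_congr rfl fun j _ => by ring]
    ring
  rw [Finset.sup'_congr _ rfl (fun pq _ => this pq),
    sup'_prod_add P Q hP hQ (fun p => (∑ j, p.1 j * x j) + p.2)
      (fun p => (∑ j, p.1 j * x j) + p.2), hPe, hQe]

lemma IsMaxAff.max {φ ψ : (Fin nx → ℝ) → ℝ} (hφ : IsMaxAff φ) (hψ : IsMaxAff ψ) :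
    IsMaxAff (fun x => max (φ x) (ψ x)) := by
  classical
  obtain ⟨P, hP, hPe⟩ := hφ
  obtain ⟨Q, hQ, hQe⟩ := hψ
  refine ⟨P ∪ Q, hP.mono Finset.subset_union_left, fun x => ?_⟩
  show φ x ⊔ ψ x = _
  rw [Finset.sup'_union hP hQ, hPe, hQe]

lemma IsMaxAff.finsetSum {κ : Type*} (s : Finset κ) (F : κ → (Fin nx → ℝ) → ℝ)
    (h : ∀ i ∈ s, IsMaxAff (F i)) : IsMaxAff (fun x => ∑ i ∈ s, F i x) := by
  classical
  induction s using Finset.cons_induction with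
  | empty => simpa using isMaxAff_zero
  | cons i s hi ih =>
    simp only [Finset.sum_cons]
    exact (h i (Finset.mem_cons_self i s)).add
      (ih fun j hj => h j (Finset.mem_cons_of_mem hj))

lemma IsMaxAff.finsetSup' {κ : Type*} (s : Finset κ) (hs : s.Nonempty)
    (F : κ → (Fin nx → ℝ) → ℝ) (h : ∀ i ∈ s, IsMaxAff (F i)) :
    IsMaxAff (fun x => s.sup' hs (fun i => F i x)) := by
  classical
  induction hs using Finset.Nonempty.cons_induction with
  | singleton i =>
    exact (h i (by simp)).congr (fun x => Finset.sup'_singleton ..)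
  | cons i s hi hs ih =>
    exact (IsMaxAff.max (h i (Finset.mem_cons_self i s))
      (ih fun j hj => h j (Finset.mem_cons_of_mem hj))).congr
      (fun x => Finset.sup'_cons hs (fun j => F j x))

lemma IsMaxAff.exists_rep {φ : (Fin nx → ℝ) → ℝ} (h : IsMaxAff φ) :
    ∃ (N : ℕ) (a : Fin (N + 1) → Fin nx → ℝ) (c : Fin (N + 1) → ℝ),
      ∀ x, φ x = (Finset.univ.sup'
        (Finset.univ_nonempty_iff.mpr (Fin.pos_iff_nonempty.mp (Nat.succ_pos N)))
        (fun i => (∑ j, a i j * x j) + c i)) := by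
  classical
  obtain ⟨P, hP, hPe⟩ := h
  have hcard : P.card = (P.card - 1) + 1 := (Nat.succ_pred_eq_of_pos (Finset.card_pos.mpr hP)).symm
  set N := P.card - 1 with hN
  let e : Fin (N + 1) → (Fin nx → ℝ) × ℝ := fun i => (P.equivFin.symm (Fin.cast hcard.symm i)).1
  have hmem : ∀ i, e i ∈ P := fun i => (P.equivFin.symm (Fin.cast hcard.symm i)).2
  have hsurj : ∀ p ∈ P, ∃ i, e i = p := by
    intro p hp
    refine ⟨Fin.cast hcard (P.equivFin ⟨p, hp⟩), ?_⟩
    simp [e]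
  refine ⟨N, fun i => (e i).1, fun i => (e i).2, fun x => ?_⟩
  rw [hPe]
  apply le_antisymm
  · refine Finset.sup'_le _ _ fun p hp => ?_
    obtain ⟨i, rfl⟩ := hsurj p hp
    exact Finset.le_sup' (f := fun i : Fin (N+1) => (∑ j, (e i).1 j * x j) + (e i).2)
      (Finset.mem_univ i)
  · exact Finset.sup'_le _ _ fun i _ =>
      Finset.le_sup' (f := fun p : (Fin nx → ℝ) × ℝ => (∑ j, p.1 j * x j) + p.2) (hmem i)

end Aux



lemma IsPolyhedron.convex {n : ℕ} {S : Set (Fin n → ℝ)} (h : IsPolyhedron S) :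
    Convex ℝ S := by
  obtain ⟨m, Z, z, rfl⟩ := h
  intro x hx y hy α β hα hβ hαβ i
  have hxi := hx i
  have hyi := hy i
  have hsum : (∑ j, Z i j * (α • x + β • y) j)
      = α * (∑ j, Z i j * x j) + β * (∑ j, Z i j * y j) := by
    rw [Finset.mul_sum, Finset.mul_sum, ← Finset.sum_add_distrib]
    refine Finset.sum_congr rfl fun j _ => ?_
    simp only [Pi.add_apply, Pi.smul_apply, smul_eq_mul]
    ring
  show (∑ j, Z i j * (α • x + β • y) j) ≤ z i
  rw [hsum]
  have h1 : α * (∑ j, Z i j * x j) ≤ α * z i := mul_le_mul_of_nonneg_left hxi hα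
  have h2 : β * (∑ j, Z i j * y j) ≤ β * z i := mul_le_mul_of_nonneg_left hyi hβ
  have h3 : α * z i + β * z i = z i := by rw [← add_mul, hαβ, one_mul]
  linarith

lemma IsPolyhedron.isClosed {n : ℕ} {S : Set (Fin n → ℝ)} (h : IsPolyhedron S) :
    IsClosed S := by
  obtain ⟨m, Z, z, rfl⟩ := h
  have : {x : Fin n → ℝ | ∀ i, (∑ j, Z i j * x j) ≤ z i}
      = ⋂ i, {x : Fin n → ℝ | (∑ j, Z i j * x j) ≤ z i} := by
    ext x; simp
  rw [this]
  refine isClosed_iInter fun i => isClosed_le ?_ continuous_const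
  exact continuous_finset_sum _ fun j _ => continuous_const.mul (continuous_apply j)

/-- Key segment lemma. -/
lemma key_segment {nx r : ℕ} (f : (Fin nx → ℝ) → ℝ) (hcont : Continuous f)
    (R : Fin r → Set (Fin nx → ℝ)) (a : Fin r → Fin nx → ℝ) (c : Fin r → ℝ)
    (hcl : ∀ i, IsClosed (R i))
    (hcover : ∀ x, ∃ i, x ∈ R i)
    (haff : ∀ i, ∀ x ∈ R i, f x = (∑ j, a i j * x j) + c i)
    (y z : Fin nx → ℝ) :
    ∃ i, f y ≤ (∑ j, a i j * y j) + c i ∧ (∑ j, a i j * z j) + c i ≤ f z := by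
  classical
  set h : Fin r → (Fin nx → ℝ) → ℝ := fun i x => (∑ j, a i j * x j) + c i with hdef
  set line : ℝ → (Fin nx → ℝ) := fun t k => y k + t * (z k - y k) with ldef
  have hline0 : line 0 = y := by funext k; simp [ldef]
  have hline1 : line 1 = z := by funext k; simp [ldef]
  set B : Fin r → ℝ := fun i => ∑ j, a i j * (z j - y j) with Bdef
  have hlin : ∀ i t, h i (line t) = h i y + t * B i := by
    intro i t
    have e1 : (∑ j, a i j * (y j + t * (z j - y j)))
        = (∑ j, a i j * y j) + t * (∑ j, a i j * (z j - y j)) := by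
      rw [Finset.mul_sum, ← Finset.sum_add_distrib]
      exact Finset.sum_congr rfl fun j _ => by ring
    simp only [hdef, ldef, Bdef]
    rw [e1]
    ring
  have lcont : Continuous line := by
    refine continuous_pi fun k => continuous_const.add ?_
    exact continuous_id.mul continuous_const
  have hIcl : ∀ j, IsClosed (line ⁻¹' R j) := fun j => (hcl j).preimage lcont
  have hHcont : ∀ i, Continuous fun t => h i (line t) := by
    intro i
    have : (fun t => h i (line t)) = fun t => h i y + t * B i := funext (hlin i)
    rw [this]
    exact continuous_const.add (continuous_id.mul continuous_const)
  set T : Set ℝ := Set.Icc 0 1 ∩ ⋃ i, {t | f (line t) ≤ h i (line t) ∧ h i z ≤ f z}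
    with Tdef
  have hTcl : IsClosed T := by
    refine isClosed_Icc.inter (isClosed_iUnion_of_finite fun i => ?_)
    by_cases hc : h i z ≤ f z
    · have : {t | f (line t) ≤ h i (line t) ∧ h i z ≤ f z}
          = {t | f (line t) ≤ h i (line t)} := by ext t; simp [hc]
      rw [this]
      exact isClosed_le (hcont.comp lcont) (hHcont i)
    · have : {t | f (line t) ≤ h i (line t) ∧ h i z ≤ f z} = ∅ := by ext t; simp [hc]
      rw [this]; exact isClosed_empty
  have hT1 : (1 : ℝ) ∈ T := by
    obtain ⟨i, hi⟩ := hcover z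
    refine ⟨⟨zero_le_one, le_refl 1⟩, Set.mem_iUnion.mpr ⟨i, ?_⟩⟩
    rw [Set.mem_setOf_eq, hline1]
    exact ⟨le_of_eq (haff i z hi), le_of_eq (haff i z hi).symm⟩
  have hbdd : BddBelow T := ⟨0, fun t ht => ht.1.1⟩
  have hsT : sInf T ∈ T := hTcl.csInf_mem ⟨1, hT1⟩ hbdd
  set s : ℝ := sInf T with sdef
  have hs0 : 0 ≤ s := hsT.1.1
  have hs1 : s ≤ 1 := hsT.1.2
  have h0T : (0 : ℝ) ∈ T := by
    rcases eq_or_lt_of_le hs0 with heq | hpos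
    · rw [heq]; exact hsT
    · exfalso
      have hIco : Set.Ico (0:ℝ) s ⊆ ⋃ j, (line ⁻¹' R j ∩ Set.Ico 0 s) := by
        intro t ht
        obtain ⟨j, hj⟩ := hcover (line t)
        exact Set.mem_iUnion.mpr ⟨j, hj, ht⟩
      have hscl : s ∈ closure (⋃ j, (line ⁻¹' R j ∩ Set.Ico 0 s)) := by
        refine closure_mono hIco ?_
        rw [closure_Ico (ne_of_lt hpos)]
        exact ⟨hs0, le_refl s⟩
      have hscl2 : s ∈ ⋃ j, closure (line ⁻¹' R j ∩ Set.Ico 0 s) := by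
        rw [← Set.biUnion_univ, Set.finite_univ.closure_biUnion, Set.biUnion_univ] at hscl
        exact hscl
      obtain ⟨j, hj⟩ := Set.mem_iUnion.mp hscl2
      have hsIj : line s ∈ R j := by
        have := closure_mono Set.inter_subset_left hj
        rwa [(hIcl j).closure_eq] at this
      obtain ⟨t, htIj, ht0, hts⟩ : ∃ t, line t ∈ R j ∧ 0 ≤ t ∧ t < s := by
        obtain ⟨t, ht⟩ := closure_nonempty_iff.mp ⟨s, hj⟩
        exact ⟨t, ht.1, ht.2.1, ht.2.2⟩
      -- t is a point strictly left of s in the same region R j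
      have hft : f (line t) = h j (line t) := haff j (line t) htIj
      have hfs : f (line s) = h j (line s) := haff j (line s) hsIj
      have htT : t ∈ T := by
        by_cases hjz : h j z ≤ f z
        · exact ⟨⟨ht0, le_trans hts.le hs1⟩,
            Set.mem_iUnion.mpr ⟨j, le_of_eq hft, hjz⟩⟩
        · push_neg at hjz
          -- s < 1 since otherwise line s = z and f z = h j z
          have hslt1 : s < 1 := by
            rcases lt_or_eq_of_le hs1 with hlt | heq1
            · exact hlt
            · exfalso
              rw [heq1, hline1] at hfs
              exact absurd hfs.symm (ne_of_gt hjz)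
          obtain ⟨i, hi⟩ := Set.mem_iUnion.mp hsT.2
          obtain ⟨hi1, hi2⟩ := hi
          -- translate everything to affine coordinates
          have es : h j y + s * B j ≤ h i y + s * B i := by
            rw [← hlin i s, ← hlin j s, ← hfs]; exact hi1
          have eiz : h i y + 1 * B i ≤ f z := by
            rw [← hlin i 1, hline1]; exact hi2
          have ejz : f z < h j y + 1 * B j := by
            rw [← hlin j 1, hline1]; exact hjz
          have hBlt : B i - B j < 0 := by
            by_contra hge
            push_neg at hge
            nlinarith [mul_nonneg (by linarith : (0:ℝ) ≤ 1 - s) hge]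
          have et : h j y + t * B j ≤ h i y + t * B i := by
            nlinarith [mul_nonneg (by linarith : (0:ℝ) ≤ s - t)
              (by linarith : (0:ℝ) ≤ B j - B i)]
          refine ⟨⟨ht0, le_trans hts.le hs1⟩, Set.mem_iUnion.mpr ⟨i, ?_, hi2⟩⟩
          show f (line t) ≤ h i (line t)
          rw [hft, hlin j t, hlin i t]
          exact et
      have := csInf_le hbdd htT
      rw [← sdef] at this
      exact absurd this (not_le.mpr hts)
  obtain ⟨i, hi⟩ := Set.mem_iUnion.mp h0T.2
  rw [Set.mem_setOf_eq, hline0] at hi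
  exact ⟨i, hi.1, hi.2⟩

/-- every continuous scalar PWA function on ℝ^{nx} is the difference of two
convex PWA functions, each a pointwise maximum of finitely many affine functions. -/
theorem pwa_diff_of_convex (nx : ℕ) (f : (Fin nx → ℝ) → ℝ)
    (hcont : Continuous f) (hpwa : IsPWAOnScalar Set.univ f) :
    ∃ (rγ rη : ℕ) (aγ : Fin (rγ + 1) → Fin nx → ℝ) (cγ : Fin (rγ + 1) → ℝ)
      (aη : Fin (rη + 1) → Fin nx → ℝ) (cη : Fin (rη + 1) → ℝ),
      ∀ x, f x =
        finMax (Nat.succ_pos rγ) (fun i => (∑ j, aγ i j * x j) + cγ i) -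
        finMax (Nat.succ_pos rη) (fun i => (∑ j, aη i j * x j) + cη i) := by
  classical
  obtain ⟨r, R, a, c, hpoly, -, hcover', haff⟩ := hpwa
  have hcover : ∀ x, ∃ i, x ∈ R i := by
    intro x
    have : x ∈ ⋃ i, R i := by rw [hcover']; trivial
    exact Set.mem_iUnion.mp this
  set h : Fin r → (Fin nx → ℝ) → ℝ := fun i x => (∑ j, a i j * x j) + c i with hdef
  have key : ∀ y z, ∃ i, f y ≤ h i y ∧ h i z ≤ f z :=
    fun y z => key_segment f hcont R a c (fun i => (hpoly i).isClosed) hcover haff y z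
  have active : ∀ x, ∃ i, f x = h i x := fun x => (hcover x).elim fun i hi => ⟨i, haff i x hi⟩
  have hrne : Nonempty (Fin r) := (active (fun _ => 0)).elim fun i _ => ⟨i⟩
  haveI := hrne
  have univne : (Finset.univ : Finset (Fin r)).Nonempty := Finset.univ_nonempty
  have hsum : ∀ (V : Finset (Fin r)) x,
      (∑ i ∈ V, h i x) = (∑ j, (∑ i ∈ V, a i j) * x j) + ∑ i ∈ V, c i := by
    intro V x
    simp only [hdef]
    rw [Finset.sum_add_distrib]
    congr 1
    rw [Finset.sum_comm]
    exact Finset.sum_congr rfl fun j _ => (Finset.sum_mul ..).symm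
  -- decomposition of a min of affine pieces as affine minus max-affine
  have hdecomp : ∀ (U : Finset (Fin r)) (hne : U.Nonempty), ∃ Af Bf : (Fin nx → ℝ) → ℝ,
      IsMaxAff Af ∧ IsMaxAff Bf ∧ ∀ x, U.inf' hne (fun i => h i x) = Af x - Bf x := by
    intro U hne
    refine ⟨fun x => (∑ j, (∑ i ∈ U, a i j) * x j) + ∑ i ∈ U, c i,
      fun x => U.sup' hne (fun jj => ∑ i ∈ U.erase jj, h i x),
      isMaxAff_affine _ _, ?_, ?_⟩
    · refine IsMaxAff.finsetSup' U hne _ fun jj _ => ?_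
      exact (isMaxAff_affine (fun j => ∑ i ∈ U.erase jj, a i j)
        (∑ i ∈ U.erase jj, c i)).congr (fun x => hsum (U.erase jj) x)
    · intro x
      show _ = ((∑ j, (∑ i ∈ U, a i j) * x j) + ∑ i ∈ U, c i)
        - U.sup' hne (fun jj => ∑ i ∈ U.erase jj, h i x)
      have e1 : U.sup' hne (fun jj => ∑ i ∈ U.erase jj, h i x)
          = (∑ i ∈ U, h i x) - U.inf' hne (fun i => h i x) := by
        have hc : ∀ jj ∈ U, (∑ i ∈ U.erase jj, h i x) = (∑ i ∈ U, h i x) - h jj x :=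
          fun jj hjj => Finset.sum_erase_eq_sub hjj
        rw [Finset.sup'_congr hne rfl hc]
        exact sup'_const_sub U hne (fun i => h i x) _
      rw [e1, ← hsum U x]
      ring
  -- the active index sets
  set S : (Fin nx → ℝ) → Finset (Fin r) :=
    fun x => Finset.univ.filter (fun i => f x ≤ h i x) with Sdef
  have hSmem : ∀ x i, i ∈ S x ↔ f x ≤ h i x := by intro x i; simp [Sdef]
  have hSne : ∀ x, (S x).Nonempty := by
    intro x
    obtain ⟨i, hi⟩ := active x
    exact ⟨i, (hSmem x i).mpr hi.le⟩
  have hUle : ∀ w, Finset.univ.inf' univne (fun i => h i w) ≤ f w := by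
    intro w
    obtain ⟨i, hi⟩ := active w
    exact le_of_le_of_eq (Finset.inf'_le _ (Finset.mem_univ i)) hi.symm
  have hSle : ∀ x w, (S x).inf' (hSne x) (fun i => h i w) ≤ f w := by
    intro x w
    obtain ⟨i, hi1, hi2⟩ := key x w
    exact le_trans (Finset.inf'_le _ ((hSmem x i).mpr hi1)) hi2
  have hSx : ∀ x, (S x).inf' (hSne x) (fun i => h i x) = f x := by
    intro x
    exact le_antisymm (hSle x x) (Finset.le_inf' _ _ fun i hi => (hSmem x i).mp hi)
  -- the capped family
  set Φ : Finset (Fin r) → (Fin nx → ℝ) → ℝ := fun T x =>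
    if hc : ∃ hT : T.Nonempty, ∀ w, T.inf' hT (fun i => h i w) ≤ f w
    then T.inf' hc.choose (fun i => h i x)
    else Finset.univ.inf' univne (fun i => h i x) with Φdef
  have hΦle : ∀ T x, Φ T x ≤ f x := by
    intro T x
    simp only [Φdef]
    split
    · next hc => exact hc.choose_spec x
    · exact hUle x
  have hΦS : ∀ x, Φ (S x) x = f x := by
    intro x
    have hc : ∃ hT : (S x).Nonempty, ∀ w, (S x).inf' hT (fun i => h i w) ≤ f w :=
      ⟨hSne x, hSle x⟩
    simp only [Φdef]
    rw [dif_pos hc]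
    exact hSx x
  have hΦdc : ∀ T, ∃ Af Bf : (Fin nx → ℝ) → ℝ,
      IsMaxAff Af ∧ IsMaxAff Bf ∧ ∀ x, Φ T x = Af x - Bf x := by
    intro T
    simp only [Φdef]
    split
    · next hc => exact hdecomp T hc.choose
    · exact hdecomp Finset.univ univne
  choose A B hA hB hAB using hΦdc
  have Fne : (Finset.univ : Finset (Finset (Fin r))).Nonempty := Finset.univ_nonempty
  have main : ∀ x, f x = Finset.univ.sup' Fne (fun T => Φ T x) := by
    intro x
    apply le_antisymm
    · calc f x = Φ (S x) x := (hΦS x).symm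
        _ ≤ _ := Finset.le_sup' (fun T => Φ T x) (Finset.mem_univ (S x))
    · exact Finset.sup'_le _ _ fun T _ => hΦle T x
  set H : (Fin nx → ℝ) → ℝ := fun x => ∑ T ∈ (Finset.univ : Finset (Finset (Fin r))), B T x
    with Hdef
  have hH : IsMaxAff H := IsMaxAff.finsetSum _ _ fun T _ => hB T
  set G : (Fin nx → ℝ) → ℝ := fun x =>
    Finset.univ.sup' Fne (fun T => A T x + ∑ T'' ∈ Finset.univ.erase T, B T'' x) with Gdef
  have hG : IsMaxAff G := by
    refine IsMaxAff.finsetSup' _ Fne _ fun T _ => ?_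
    exact (hA T).add (IsMaxAff.finsetSum _ _ fun T'' _ => hB T'')
  have hGfH : ∀ x, G x = f x + H x := by
    intro x
    have e2 : ∀ T ∈ (Finset.univ : Finset (Finset (Fin r))),
        A T x + ∑ T'' ∈ Finset.univ.erase T, B T'' x = Φ T x + H x := by
      intro T _
      rw [Finset.sum_erase_eq_sub (Finset.mem_univ T), hAB T x, Hdef]
      ring
    simp only [Gdef]
    rw [Finset.sup'_congr Fne rfl e2,
      sup'_add_const Finset.univ Fne (fun T => Φ T x) (H x), ← main x]
  obtain ⟨Nγ, aγ, cγ, hγ⟩ := hG.exists_rep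
  obtain ⟨Nη, aη, cη, hη⟩ := hH.exists_rep
  refine ⟨Nγ, Nη, aγ, cγ, aη, cη, fun x => ?_⟩
  simp only [finMax]
  rw [← hγ x, ← hη x]
  have := hGfH x
  linarith
end

section
/- Let f : [0,1]^{n_x} → ℝ, f(x) = max_{i=1,…,N} f_i(x), be the pointwise maximum of N affine functions f_1, …, f_N, with f nonnegative on [0,1]^{n_x}. Then there exist parameters θ such that the deep ReLU network N(·;θ, n_x+1, N) of width M = n_x + 1 and depth L = N satisfies N(x;θ, n_x+1, N) = f(x) for all x ∈ [0,1]^{n_x}. -/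
open Finset Matrix

namespace MaxReluAux

/-- Iterate a ℕ-indexed family of maps. -/
def iterStep {α : Type*} (g : ℕ → α → α) (init : α) : ℕ → α
  | 0 => init
  | k+1 => g k (iterStep g init k)

theorem foldl_finRange_iter {α : Type*} (g : ℕ → α → α) (init : α) (n : ℕ) :
    List.foldl (fun s (l : Fin n) => g l.val s) init (List.finRange n) =
      iterStep g init n := by
  induction n with
  | zero => simp [iterStep]
  | succ n ih =>
    rw [List.finRange_succ_last, List.foldl_append, List.foldl_map]
    simp only [Fin.coe_castSucc, Fin.val_last, List.foldl_cons, List.foldl_nil]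
    rw [ih]
    rfl

/-- Clamped index into `Fin N`. -/
def idxc (N : ℕ) (hN : 0 < N) (k : ℕ) : Fin N := ⟨min k (N-1), by omega⟩

/-- The affine function value. -/
def Aaff {nx N : ℕ} (a : Fin N → Fin nx → ℝ) (c : Fin N → ℝ) (i : Fin N)
    (x : Fin nx → ℝ) : ℝ := (∑ j, a i j * x j) + c i

def W1mat (nx : ℕ) : Matrix (Fin (nx+1)) (Fin nx) ℝ :=
  fun i j => if (i:ℕ) = (j:ℕ) then 1 else 0

noncomputable def Wmat {nx N : ℕ} (hN : 0 < N) (a : Fin N → Fin nx → ℝ) (k : ℕ) :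
    Matrix (Fin (nx+1)) (Fin (nx+1)) ℝ :=
  fun i j => if (i:ℕ) = (j:ℕ) then 1 else
    if h : (j:ℕ) < nx then
      (if (i:ℕ) = nx then a (idxc N hN k) ⟨j, h⟩ - a (idxc N hN (k+1)) ⟨j, h⟩ else 0)
    else 0

noncomputable def bvec (nx : ℕ) {N : ℕ} (hN : 0 < N) (c : Fin N → ℝ) (k : ℕ) :
    Fin (nx+1) → ℝ :=
  fun i => if (i:ℕ) = nx then c (idxc N hN k) - c (idxc N hN (k+1)) else 0

noncomputable def Woutmat {nx N : ℕ} (hN : 0 < N) (a : Fin N → Fin nx → ℝ) :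
    Matrix (Fin 1) (Fin (nx+1)) ℝ :=
  fun _ j => if h : (j:ℕ) < nx then a (idxc N hN (N-1)) ⟨j, h⟩ else 1

lemma sum_W1_row (nx : ℕ) (x : Fin nx → ℝ) (j : Fin nx) :
    (∑ j', W1mat nx j.castSucc j' * x j') = x j := by
  rw [Finset.sum_eq_single j]
  · simp [W1mat]
  · intro j' _ hne
    have : ¬ ((j : ℕ) = (j' : ℕ)) := fun h => hne (Fin.ext h.symm)
    simp [W1mat, this]
  · simp

lemma sum_W1_last (nx : ℕ) (x : Fin nx → ℝ) :
    (∑ j', W1mat nx (Fin.last nx) j' * x j') = 0 := by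
  apply Finset.sum_eq_zero
  intro j' _
  have : ¬ (nx = (j' : ℕ)) := by omega
  simp [W1mat, this]

lemma sum_W_row {nx N : ℕ} (hN : 0 < N) (a : Fin N → Fin nx → ℝ) (k : ℕ)
    (v : Fin (nx+1) → ℝ) (j : Fin nx) :
    (∑ j', Wmat hN a k j.castSucc j' * v j') = v j.castSucc := by
  rw [Finset.sum_eq_single j.castSucc]
  · simp [Wmat]
  · intro j' _ hne
    have h1 : ¬ ((j : ℕ) = (j' : ℕ)) := by
      intro h; exact hne (Fin.ext (by simpa using h.symm))
    have h2 : ¬ ((j : ℕ) = nx) := by omega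
    simp [Wmat, h1, h2]
  · simp

lemma sum_W_last {nx N : ℕ} (hN : 0 < N) (a : Fin N → Fin nx → ℝ) (k : ℕ)
    (v : Fin (nx+1) → ℝ) :
    (∑ j', Wmat hN a k (Fin.last nx) j' * v j') =
      (∑ j : Fin nx, (a (idxc N hN k) j - a (idxc N hN (k+1)) j) * v j.castSucc)
        + v (Fin.last nx) := by
  rw [Fin.sum_univ_castSucc]
  congr 1
  · apply Finset.sum_congr rfl
    intro j _
    have h1 : ¬ (nx = (j : ℕ)) := by omega
    have h2 : ((j : ℕ) : ℕ) < nx := j.isLt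
    simp [Wmat, h1, h2]
  · simp [Wmat]

lemma sum_Wout {nx N : ℕ} (hN : 0 < N) (a : Fin N → Fin nx → ℝ)
    (v : Fin (nx+1) → ℝ) :
    (∑ j', Woutmat hN a 0 j' * v j') =
      (∑ j : Fin nx, a (idxc N hN (N-1)) j * v j.castSucc) + v (Fin.last nx) := by
  rw [Fin.sum_univ_castSucc]
  congr 1
  · apply Finset.sum_congr rfl
    intro j _
    have h2 : (j.castSucc : ℕ) < nx := j.isLt
    simp [Woutmat, h2]
  · have : ¬ ((Fin.last nx : ℕ) < nx) := by simp
    simp [Woutmat, this]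

end MaxReluAux

/-- a nonnegative pointwise maximum of `N` affine functions on the unit cube
can be exactly represented by a ReLU network of width `nx + 1` and depth `N`. -/
theorem max_of_affine_exact_relu_net (nx N : ℕ) (hN : 0 < N)
    (a : Fin N → Fin nx → ℝ) (c : Fin N → ℝ) (f : (Fin nx → ℝ) → ℝ)
    (hf : ∀ x, f x = finMax hN (fun i => (∑ j, a i j * x j) + c i))
    (hnonneg : ∀ x ∈ unitCube nx, 0 ≤ f x) :
    ∃ θ : ReLUNetParams nx 1 (nx + 1) N, ∀ x ∈ unitCube nx, θ.eval x 0 = f x := by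
  classical
  open MaxReluAux in
  refine ⟨{ W1 := W1mat nx, b1 := 0, W := fun l => Wmat hN a l.val,
            b := fun l => bvec nx hN c l.val, Wout := Woutmat hN a,
            bout := fun _ => c (idxc N hN (N-1)) }, ?_⟩
  intro x hx
  set A : ℕ → ℝ := fun k => Aaff a c (idxc N hN k) x with hA
  set g : ℕ → (Fin (nx+1) → ℝ) → (Fin (nx+1) → ℝ) :=
    fun k s => reluVec (affineMapVec (Wmat hN a k) (bvec nx hN c k) s) with hg
  set init : Fin (nx+1) → ℝ := reluVec (affineMapVec (W1mat nx) 0 x) with hinit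
  set St : ℕ → Fin (nx+1) → ℝ := iterStep g init with hSt
  have hHne : ∀ m : ℕ, (Finset.range (m+1)).Nonempty :=
    fun m => Finset.nonempty_range_iff.2 (Nat.succ_ne_zero m)
  set H : ℕ → ℝ := fun m => (Finset.range (m+1)).sup' (hHne m) A with hH
  have key : ∀ m : ℕ, (∀ j : Fin nx, St m j.castSucc = x j) ∧
      St m (Fin.last nx) = H m - A m := by
    intro m
    induction m with
    | zero =>
      constructor
      · intro j
        show max 0 ((∑ j', W1mat nx j.castSucc j' * x j') + (0 : Fin (nx+1) → ℝ) j.castSucc) = x j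
        rw [sum_W1_row]
        simp [max_eq_right (hx j).1]
      · show max 0 ((∑ j', W1mat nx (Fin.last nx) j' * x j') + (0 : Fin (nx+1) → ℝ) (Fin.last nx)) = _
        rw [sum_W1_last]
        have : H 0 = A 0 := by simp [hH]
        simp [this]
    | succ m ih =>
      have hrec : St (m+1) = g m (St m) := rfl
      have hHsucc : H (m+1) = max (A (m+1)) (H m) := by
        apply le_antisymm
        · apply Finset.sup'_le
          intro k hk
          rw [Finset.mem_range] at hk
          rcases Nat.lt_succ_iff_lt_or_eq.mp hk with h | h
          · exact le_trans (Finset.le_sup' A (Finset.mem_range.mpr h)) (le_max_right _ _)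
          · rw [h]; exact le_max_left _ _
        · apply max_le
          · exact Finset.le_sup' A (Finset.mem_range.mpr (by omega))
          · apply Finset.sup'_le
            intro k hk
            rw [Finset.mem_range] at hk
            exact Finset.le_sup' A (Finset.mem_range.mpr (by omega))
      constructor
      · intro j
        rw [hrec]
        show max 0 ((∑ j', Wmat hN a m j.castSucc j' * St m j') + bvec nx hN c m j.castSucc) = x j
        rw [sum_W_row]
        have hb : bvec nx hN c m j.castSucc = 0 := by
          have : ¬ ((j : ℕ) = nx) := by omega
          simp [bvec, this]
        rw [hb, ih.1 j, add_zero, max_eq_right (hx j).1]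
      · rw [hrec]
        show max 0 ((∑ j', Wmat hN a m (Fin.last nx) j' * St m j')
            + bvec nx hN c m (Fin.last nx)) = _
        rw [sum_W_last]
        have hb : bvec nx hN c m (Fin.last nx) = c (idxc N hN m) - c (idxc N hN (m+1)) := by
          simp [bvec]
        rw [hb, ih.2]
        have hsum : (∑ j : Fin nx, (a (idxc N hN m) j - a (idxc N hN (m+1)) j) * St m j.castSucc)
            = (∑ j, a (idxc N hN m) j * x j) - (∑ j, a (idxc N hN (m+1)) j * x j) := by
          rw [← Finset.sum_sub_distrib]
          apply Finset.sum_congr rfl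
          intro j _
          rw [ih.1 j]; ring
        rw [hsum]
        have harith : (∑ j, a (idxc N hN m) j * x j) - (∑ j, a (idxc N hN (m+1)) j * x j)
            + (H m - A m) + (c (idxc N hN m) - c (idxc N hN (m+1))) = H m - A (m+1) := by
          simp only [hA, Aaff]; ring
        rw [harith, hHsucc]
        rw [← max_sub_sub_right, sub_self]
  -- compute the evaluation
  have heval : (List.finRange (N-1)).foldl
      (fun ξ l => reluVec (affineMapVec (Wmat hN a (l : Fin (N-1)).val)
        (bvec nx hN c (l : Fin (N-1)).val) ξ))
      (reluVec (affineMapVec (W1mat nx) 0 x)) = St (N-1) :=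
    foldl_finRange_iter g init (N-1)
  show affineMapVec (Woutmat hN a) _ _ 0 = f x
  rw [heval]
  show (∑ j', Woutmat hN a 0 j' * St (N-1) j') + c (idxc N hN (N-1)) = f x
  rw [sum_Wout, (key (N-1)).2]
  have hxs : (∑ j : Fin nx, a (idxc N hN (N-1)) j * St (N-1) j.castSucc)
      = ∑ j, a (idxc N hN (N-1)) j * x j := by
    apply Finset.sum_congr rfl
    intro j _
    rw [(key (N-1)).1 j]
  rw [hxs]
  have : (∑ j, a (idxc N hN (N-1)) j * x j) + (H (N-1) - A (N-1)) + c (idxc N hN (N-1))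
      = H (N-1) := by
    simp only [hA, Aaff]; ring
  rw [this, hf x]
  apply le_antisymm
  · apply Finset.sup'_le
    intro k hk
    have hk' : idxc N hN k = idxc N hN k := rfl
    exact Finset.le_sup' (fun i : Fin N => (∑ j, a i j * x j) + c i)
      (Finset.mem_univ (idxc N hN k))
  · apply Finset.sup'_le
    intro i _
    have hi : idxc N hN (i : ℕ) = i := by
      apply Fin.ext
      simp only [idxc]
      omega
    have hmem : (i : ℕ) ∈ Finset.range (N - 1 + 1) := by
      rw [Finset.mem_range]
      omega
    calc (∑ j, a i j * x j) + c i = A (i : ℕ) := by rw [hA]; simp [Aaff, hi]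
      _ ≤ H (N-1) := Finset.le_sup' A hmem
end

section
/- Let K : R_Ω → ℝ^{n_u} be a continuous piecewise affine function on a bounded polytopic set R_Ω ⊆ ℝ^{n_x}, and suppose there exist invertible affine maps A_x : ℝ^{n_x} → ℝ^{n_x} with A_x(R_Ω) = [0,1]^{n_x} and A_u : ℝ^{n_u} → ℝ^{n_u} such that every component of A_u ∘ K ∘ A_x^{-1} is nonnegative on [0,1]^{n_x}. Then there exist, for each i = 1, …, n_u, depths r_{γ,i}, r_{η,i} ≥ 1 and parameters θ_{γ,i}, θ_{η,i} of scalar-output ReLU networks of width w = n_x + 1, such that for all x ∈ R_Ω, K(x) = A_u^{-1}( ( N(A_x(x);θ_{γ,i}, w, r_{γ,i}) − N(A_x(x);θ_{η,i}, w, r_{η,i}) )_{i=1,…,n_u} ); that is, K is exactly represented by two invertible affine transformations and 2 n_u deep ReLU networks. -/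
open Finset Matrix

namespace MPCProof
noncomputable section
open Set Finset Matrix

def aval {n : ℕ} (v : Fin n → ℝ) (β : ℝ) (y : Fin n → ℝ) : ℝ := (∑ j, v j * y j) + β

def seg {n : ℕ} (a b : Fin n → ℝ) (t : ℝ) : Fin n → ℝ := fun j => (1 - t) * a j + t * b j

lemma aval_seg {n : ℕ} (v : Fin n → ℝ) (β : ℝ) (a b : Fin n → ℝ) (t : ℝ) :
    aval v β (seg a b t) = (1 - t) * aval v β a + t * aval v β b := by
  have h : ∀ j, v j * ((1 - t) * a j + t * b j)
      = (1 - t) * (v j * a j) + t * (v j * b j) := by intro j; ring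
  simp_rw [aval, seg, h, Finset.sum_add_distrib, ← Finset.mul_sum]
  ring

lemma seg_continuous {n : ℕ} (a b : Fin n → ℝ) : Continuous (seg a b) := by
  unfold seg; fun_prop

def Gfun (Φ : ℝ → ℝ) (t : ℝ) : ℝ := Φ t - ((1 - t) * Φ 0 + t * Φ 1)

lemma secant_of_local_midpoint (Φ : ℝ → ℝ) (hc : ContinuousOn Φ (Set.Icc 0 1))
    (hloc : ∀ t₀ ∈ Set.Ioo (0:ℝ) 1, ∃ ε > 0, ∀ s : ℝ, 0 < s → s ≤ ε →
      t₀ - s ∈ Set.Icc (0:ℝ) 1 → t₀ + s ∈ Set.Icc (0:ℝ) 1 →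
      Φ t₀ ≤ (Φ (t₀ - s) + Φ (t₀ + s)) / 2) :
    ∀ t ∈ Set.Icc (0:ℝ) 1, Φ t ≤ (1 - t) * Φ 0 + t * Φ 1 := by
  have hGc : ContinuousOn (Gfun Φ) (Set.Icc 0 1) := by
    unfold Gfun; apply hc.sub; fun_prop
  obtain ⟨tm, htm, hmax⟩ := isCompact_Icc.exists_isMaxOn ⟨0, by norm_num⟩ hGc
  rcases le_or_gt (Gfun Φ tm) 0 with hM | hM
  · intro t ht
    have h1 : Gfun Φ t ≤ Gfun Φ tm := hmax ht
    unfold Gfun at h1 hM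
    linarith
  · exfalso
    have hSclosed : IsClosed (Set.Icc (0:ℝ) 1 ∩ Gfun Φ ⁻¹' {Gfun Φ tm}) :=
      hGc.preimage_isClosed_of_isClosed isClosed_Icc isClosed_singleton
    have hSne : (Set.Icc (0:ℝ) 1 ∩ Gfun Φ ⁻¹' {Gfun Φ tm}).Nonempty := ⟨tm, htm, rfl⟩
    have hSbdd : BddAbove (Set.Icc (0:ℝ) 1 ∩ Gfun Φ ⁻¹' {Gfun Φ tm}) :=
      ⟨1, fun x hx => hx.1.2⟩
    obtain ⟨ht₀Icc, ht₀pre⟩ := hSclosed.csSup_mem hSne hSbdd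
    set t₀ := sSup (Set.Icc (0:ℝ) 1 ∩ Gfun Φ ⁻¹' {Gfun Φ tm}) with ht₀def
    have hGt₀ : Gfun Φ t₀ = Gfun Φ tm := ht₀pre
    have hG0 : Gfun Φ 0 = 0 := by unfold Gfun; ring
    have hG1 : Gfun Φ 1 = 0 := by unfold Gfun; ring
    have ht0 : t₀ ≠ 0 := by intro h; rw [h, hG0] at hGt₀; linarith
    have ht1 : t₀ ≠ 1 := by intro h; rw [h, hG1] at hGt₀; linarith
    have ht₀Ioo : t₀ ∈ Set.Ioo (0:ℝ) 1 :=
      ⟨lt_of_le_of_ne ht₀Icc.1 (Ne.symm ht0), lt_of_le_of_ne ht₀Icc.2 ht1⟩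
    obtain ⟨ε, hε, hmid⟩ := hloc t₀ ht₀Ioo
    have hs0 : 0 < min ε (min t₀ (1 - t₀)) := by
      apply lt_min hε; exact lt_min ht₀Ioo.1 (by linarith [ht₀Ioo.2])
    set s := min ε (min t₀ (1 - t₀)) with hsdef
    have hsε : s ≤ ε := min_le_left _ _
    have hst : s ≤ t₀ := le_trans (min_le_right _ _) (min_le_left _ _)
    have hst1 : s ≤ 1 - t₀ := le_trans (min_le_right _ _) (min_le_right _ _)
    have hmem1 : t₀ - s ∈ Set.Icc (0:ℝ) 1 := ⟨by linarith, by linarith [ht₀Icc.2]⟩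
    have hmem2 : t₀ + s ∈ Set.Icc (0:ℝ) 1 := ⟨by linarith [ht₀Icc.1], by linarith⟩
    have hΦ := hmid s hs0 hsε hmem1 hmem2
    have hGmid : Gfun Φ t₀ ≤ (Gfun Φ (t₀ - s) + Gfun Φ (t₀ + s)) / 2 := by
      unfold Gfun; ring_nf; ring_nf at hΦ; linarith
    have h1 : Gfun Φ (t₀ - s) ≤ Gfun Φ tm := hmax hmem1
    have h2 : Gfun Φ (t₀ + s) < Gfun Φ tm := by
      rcases lt_or_eq_of_le (show Gfun Φ (t₀ + s) ≤ Gfun Φ tm from hmax hmem2) with h | h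
      · exact h
      · exfalso
        have hmem : t₀ + s ∈ Set.Icc (0:ℝ) 1 ∩ Gfun Φ ⁻¹' {Gfun Φ tm} := ⟨hmem2, h⟩
        have := le_csSup hSbdd hmem
        rw [← ht₀def] at this
        linarith
    rw [hGt₀] at hGmid
    linarith

lemma foldl_invariant {α : Type*} (n : ℕ) (step : α → Fin n → α)
    (P : ℕ → α → Prop) (init : α)
    (h0 : P 0 init) (hstep : ∀ (m : ℕ) (h : m < n) ξ, P m ξ → P (m + 1) (step ξ ⟨m, h⟩)) :
    P n ((List.finRange n).foldl step init) := by
  induction n generalizing init P with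
  | zero => simpa using h0
  | succ n ih =>
    rw [List.finRange_succ, List.foldl_cons, List.foldl_map]
    exact ih (fun ξ k => step ξ k.succ) (fun m ξ => P (m + 1) ξ) (step init 0)
      (hstep 0 (Nat.succ_pos n) init h0)
      (fun m h ξ hp => by
        have h2 := hstep (m + 1) (Nat.succ_lt_succ h) ξ hp
        simpa [Fin.succ_mk] using h2)

lemma relu_max_eq (a c : ℝ) : max 0 (a - c) = max a c - c := by
  rcases le_total a c with h | h
  · rw [max_eq_left (by linarith), max_eq_right h]; ring
  · rw [max_eq_right (by linarith), max_eq_left h]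

noncomputable def psup {nx N : ℕ} (hN : 1 ≤ N) (v : Fin N → Fin nx → ℝ) (β : Fin N → ℝ)
    (y : Fin nx → ℝ) (m : ℕ) : ℝ :=
  (Finset.univ.filter (fun k : Fin N => (k : ℕ) ≤ m)).sup'
    ⟨⟨0, by omega⟩, by simp⟩ (fun k => aval (v k) (β k) y)

lemma psup_zero {nx N : ℕ} (hN : 1 ≤ N) (v : Fin N → Fin nx → ℝ) (β : Fin N → ℝ)
    (y : Fin nx → ℝ) (h0 : 0 < N) :
    psup hN v β y 0 = aval (v ⟨0, h0⟩) (β ⟨0, h0⟩) y := by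
  unfold psup
  have h : (Finset.univ.filter (fun k : Fin N => (k : ℕ) ≤ 0)) = {⟨0, h0⟩} := by
    ext k; simp [Fin.ext_iff]
  simp_rw [h]
  simp

lemma psup_succ {nx N : ℕ} (hN : 1 ≤ N) (v : Fin N → Fin nx → ℝ) (β : Fin N → ℝ)
    (y : Fin nx → ℝ) (m : ℕ) (hm : m + 1 < N) :
    psup hN v β y (m + 1)
      = max (psup hN v β y m) (aval (v ⟨m + 1, hm⟩) (β ⟨m + 1, hm⟩) y) := by
  unfold psup
  have hins : (Finset.univ.filter (fun k : Fin N => (k : ℕ) ≤ m + 1))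
      = insert ⟨m + 1, hm⟩ (Finset.univ.filter (fun k : Fin N => (k : ℕ) ≤ m)) := by
    ext k
    simp only [Finset.mem_insert, Finset.mem_filter, Finset.mem_univ, true_and, Fin.ext_iff]
    omega
  simp_rw [hins]
  rw [Finset.sup'_insert (H := ⟨⟨0, by omega⟩, by simp⟩), max_comm]

lemma psup_last {nx N : ℕ} (hN : 1 ≤ N) (v : Fin N → Fin nx → ℝ) (β : Fin N → ℝ)
    (y : Fin nx → ℝ) :
    psup hN v β y (N - 1)
      = Finset.univ.sup' ⟨⟨0, by omega⟩, Finset.mem_univ _⟩ (fun k => aval (v k) (β k) y) := by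
  unfold psup
  have h : (Finset.univ.filter (fun k : Fin N => (k : ℕ) ≤ N - 1)) = Finset.univ := by
    ext k; simp; omega
  simp_rw [h]

/-- the max-computing network -/
noncomputable def netP {nx : ℕ} (N : ℕ) (hN : 1 ≤ N) (v : Fin N → Fin nx → ℝ)
    (β : Fin N → ℝ) : ReLUNetParams nx 1 (nx + 1) N where
  W1 := fun i j => if (i : ℕ) = (j : ℕ) then 1 else 0
  b1 := 0
  W := fun l => fun i j =>
    if (i : ℕ) < nx then (if i = j then 1 else 0)
    else if hj : (j : ℕ) < nx then
        v ⟨(l : ℕ), by omega⟩ ⟨(j : ℕ), hj⟩ - v ⟨(l : ℕ) + 1, by omega⟩ ⟨(j : ℕ), hj⟩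
      else 1
  b := fun l => fun i =>
    if (i : ℕ) < nx then 0 else β ⟨(l : ℕ), by omega⟩ - β ⟨(l : ℕ) + 1, by omega⟩
  Wout := fun _ j => if hj : (j : ℕ) < nx then v ⟨N - 1, by omega⟩ ⟨(j : ℕ), hj⟩ else 1
  bout := fun _ => β ⟨N - 1, by omega⟩

lemma relu_net_max {nx : ℕ} (N : ℕ) (hN : 1 ≤ N) (v : Fin N → Fin nx → ℝ) (β : Fin N → ℝ) :
    ∀ y : Fin nx → ℝ, (∀ j, 0 ≤ y j) →
      (netP N hN v β).eval y 0 = Finset.univ.sup' ⟨⟨0, by omega⟩, Finset.mem_univ _⟩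
        (fun k => aval (v k) (β k) y) := by
  classical
  intro y hy
  have hNlt : N - 1 < N := by omega
  -- the invariant
  set P : ℕ → (Fin (nx + 1) → ℝ) → Prop := fun m ξ =>
    (∀ j : Fin nx, ξ ⟨(j : ℕ), by omega⟩ = y j) ∧
    (∀ h : m < N, ξ ⟨nx, by omega⟩ = psup hN v β y m - aval (v ⟨m, h⟩) (β ⟨m, h⟩) y)
    with hPdef
  -- base case
  have base : P 0 (reluVec (affineMapVec (netP N hN v β).W1 (netP N hN v β).b1 y)) := by
    have hstate : ∀ i : Fin (nx + 1),
        reluVec (affineMapVec (netP N hN v β).W1 (netP N hN v β).b1 y) i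
          = max 0 (if hi : (i : ℕ) < nx then y ⟨(i : ℕ), hi⟩ else 0) := by
      intro i
      simp only [reluVec, affineMapVec, netP, Pi.zero_apply, add_zero]
      congr 1
      by_cases hi : (i : ℕ) < nx
      · rw [dif_pos hi]
        rw [Finset.sum_eq_single_of_mem (⟨(i : ℕ), hi⟩ : Fin nx) (Finset.mem_univ _)
          (fun j _ hne => by
            have hne' : ¬((i : ℕ) = (j : ℕ)) := by
              intro h; exact hne (by apply Fin.ext; simp [← h])
            simp [hne'])]
        simp
      · rw [dif_neg hi]
        apply Finset.sum_eq_zero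
        intro j _
        have hne' : ¬((i : ℕ) = (j : ℕ)) := by have := j.isLt; omega
        simp [hne']
    constructor
    · intro j
      rw [hstate ⟨(j : ℕ), by omega⟩]
      rw [dif_pos j.isLt]
      simp only [Fin.eta]
      exact max_eq_right (hy j)
    · intro h
      rw [hstate ⟨nx, by omega⟩, dif_neg (by simp), psup_zero hN v β y h]
      simp
  -- step case
  have step : ∀ (m : ℕ) (h : m < N - 1) ξ, P m ξ →
      P (m + 1) (reluVec (affineMapVec ((netP N hN v β).W ⟨m, h⟩)
        ((netP N hN v β).b ⟨m, h⟩) ξ)) := by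
    intro m h ξ hPm
    obtain ⟨hx, hd⟩ := hPm
    have hmN : m < N := by omega
    have hm1N : m + 1 < N := by omega
    constructor
    · intro j
      have hlt : ((⟨(j : ℕ), by omega⟩ : Fin (nx + 1)) : ℕ) < nx := j.isLt
      show max 0 _ = y j
      rw [show affineMapVec ((netP N hN v β).W ⟨m, h⟩) ((netP N hN v β).b ⟨m, h⟩) ξ
            ⟨(j : ℕ), by omega⟩
          = (∑ j' : Fin (nx + 1),
              (if (⟨(j : ℕ), by omega⟩ : Fin (nx + 1)) = j' then (1:ℝ) else 0) * ξ j') + 0 by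
        simp only [affineMapVec, netP, Fin.val_mk, j.isLt, if_true]]
      rw [add_zero, Finset.sum_eq_single (⟨(j : ℕ), by omega⟩ : Fin (nx + 1))]
      · rw [if_pos rfl, one_mul, hx j]
        exact max_eq_right (hy j)
      · intro b _ hne; rw [if_neg (Ne.symm hne), zero_mul]
      · simp
    · intro _
      show max 0 _ = _
      rw [show affineMapVec ((netP N hN v β).W ⟨m, h⟩) ((netP N hN v β).b ⟨m, h⟩) ξ
            ⟨nx, by omega⟩
          = (∑ j' : Fin (nx + 1),
              (if hj : (j' : ℕ) < nx then
                v ⟨m, by omega⟩ ⟨(j' : ℕ), hj⟩ - v ⟨m + 1, by omega⟩ ⟨(j' : ℕ), hj⟩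
               else 1) * ξ j')
            + (β ⟨m, by omega⟩ - β ⟨m + 1, by omega⟩) by
        simp only [affineMapVec, netP, Fin.val_mk, lt_irrefl, if_false]]
      rw [Fin.sum_univ_castSucc]
      have hmkcs : ∀ (j : Fin nx) (hj : ((j.castSucc : Fin (nx + 1)) : ℕ) < nx),
          (⟨((j.castSucc : Fin (nx + 1)) : ℕ), hj⟩ : Fin nx) = j :=
        fun j hj => Fin.ext (by simp)
      have hterm : ∀ j : Fin nx,
          (if hj : ((j.castSucc : Fin (nx + 1)) : ℕ) < nx then
              v ⟨m, by omega⟩ ⟨((j.castSucc : Fin (nx + 1)) : ℕ), hj⟩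
               - v ⟨m + 1, by omega⟩ ⟨((j.castSucc : Fin (nx + 1)) : ℕ), hj⟩
            else 1) * ξ j.castSucc
          = (v ⟨m, hmN⟩ j - v ⟨m + 1, hm1N⟩ j) * y j := by
        intro j
        rw [dif_pos (show ((j.castSucc : Fin (nx + 1)) : ℕ) < nx by simpa using j.isLt)]
        have h1 : ξ j.castSucc = y j := hx j
        rw [h1, hmkcs j]
      rw [Finset.sum_congr rfl (fun j _ => hterm j)]
      have hlast : (if hj : ((Fin.last nx : Fin (nx + 1)) : ℕ) < nx then
            v ⟨m, by omega⟩ ⟨((Fin.last nx : Fin (nx + 1)) : ℕ), hj⟩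
             - v ⟨m + 1, by omega⟩ ⟨((Fin.last nx : Fin (nx + 1)) : ℕ), hj⟩
          else 1) * ξ (Fin.last nx) = ξ ⟨nx, by omega⟩ := by
        rw [dif_neg (by simp)]
        rw [one_mul]
        rfl
      rw [hlast, hd hmN]
      have harg : (∑ j : Fin nx, (v ⟨m, hmN⟩ j - v ⟨m + 1, hm1N⟩ j) * y j)
            + (psup hN v β y m - aval (v ⟨m, hmN⟩) (β ⟨m, hmN⟩) y)
            + (β ⟨m, by omega⟩ - β ⟨m + 1, by omega⟩)
          = psup hN v β y m - aval (v ⟨m + 1, hm1N⟩) (β ⟨m + 1, hm1N⟩) y := by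
        simp only [aval, sub_mul, Finset.sum_sub_distrib]
        ring
      rw [harg, relu_max_eq, ← psup_succ hN v β y m hm1N]
  -- apply the invariant
  have final := foldl_invariant (N - 1)
    (fun ξ l => reluVec (affineMapVec ((netP N hN v β).W l) ((netP N hN v β).b l) ξ))
    P (reluVec (affineMapVec (netP N hN v β).W1 (netP N hN v β).b1 y)) base step
  obtain ⟨hfx, hfd⟩ := final
  show affineMapVec (netP N hN v β).Wout (netP N hN v β).bout _ 0 = _
  rw [show affineMapVec (netP N hN v β).Wout (netP N hN v β).bout
        ((List.finRange (N - 1)).foldl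
          (fun ξ l => reluVec (affineMapVec ((netP N hN v β).W l) ((netP N hN v β).b l) ξ))
          (reluVec (affineMapVec (netP N hN v β).W1 (netP N hN v β).b1 y))) 0
      = (∑ j' : Fin (nx + 1),
          (if hj : (j' : ℕ) < nx then v ⟨N - 1, hNlt⟩ ⟨(j' : ℕ), hj⟩ else 1) *
            ((List.finRange (N - 1)).foldl
              (fun ξ l => reluVec (affineMapVec ((netP N hN v β).W l) ((netP N hN v β).b l) ξ))
              (reluVec (affineMapVec (netP N hN v β).W1 (netP N hN v β).b1 y))) j')
        + β ⟨N - 1, hNlt⟩ by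
    simp only [affineMapVec, netP]]
  rw [Fin.sum_univ_castSucc]
  have hmkcs2 : ∀ (j : Fin nx) (hj : ((j.castSucc : Fin (nx + 1)) : ℕ) < nx),
      (⟨((j.castSucc : Fin (nx + 1)) : ℕ), hj⟩ : Fin nx) = j :=
    fun j hj => Fin.ext (by simp)
  set ξf := (List.finRange (N - 1)).foldl
      (fun ξ l => reluVec (affineMapVec ((netP N hN v β).W l) ((netP N hN v β).b l) ξ))
      (reluVec (affineMapVec (netP N hN v β).W1 (netP N hN v β).b1 y)) with hξf
  have hterm : ∀ j : Fin nx,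
      (if hj : ((j.castSucc : Fin (nx + 1)) : ℕ) < nx then
          v ⟨N - 1, hNlt⟩ ⟨((j.castSucc : Fin (nx + 1)) : ℕ), hj⟩ else 1) * ξf j.castSucc
        = v ⟨N - 1, hNlt⟩ j * y j := by
    intro j
    rw [dif_pos (show ((j.castSucc : Fin (nx + 1)) : ℕ) < nx by simpa using j.isLt)]
    have h1 : ξf j.castSucc = y j := hfx j
    rw [h1, hmkcs2 j]
  rw [Finset.sum_congr rfl (fun j _ => hterm j)]
  rw [show (if hj : ((Fin.last nx : Fin (nx + 1)) : ℕ) < nx then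
        v ⟨N - 1, hNlt⟩ ⟨((Fin.last nx : Fin (nx + 1)) : ℕ), hj⟩ else 1) * ξf (Fin.last nx)
      = ξf ⟨nx, by omega⟩ by rw [dif_neg (by simp), one_mul]; rfl]
  rw [hfd hNlt, ← psup_last hN v β y]
  simp only [aval]
  ring

lemma aval_continuous {n : ℕ} (v : Fin n → ℝ) (β : ℝ) : Continuous (aval v β) := by
  unfold aval; fun_prop

lemma seg_zero {n : ℕ} (a b : Fin n → ℝ) : seg a b 0 = a := by
  funext j; simp [seg]

lemma seg_one {n : ℕ} (a b : Fin n → ℝ) : seg a b 1 = b := by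
  funext j; simp [seg]

lemma cube_closed (n : ℕ) : IsClosed (unitCube n) := by
  have h : unitCube n = Set.pi Set.univ (fun _ : Fin n => Set.Icc (0:ℝ) 1) := by
    ext x
    simp only [unitCube, Set.mem_setOf_eq, Set.mem_pi, Set.mem_univ, true_implies, Set.mem_Icc]
  rw [h]
  exact isClosed_set_pi (fun a _ => isClosed_Icc)

lemma cube_nonempty (n : ℕ) : (fun _ : Fin n => (0:ℝ)) ∈ unitCube n := by
  intro i; norm_num

lemma cube_seg {n : ℕ} {a b : Fin n → ℝ} (ha : a ∈ unitCube n) (hb : b ∈ unitCube n)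
    {t : ℝ} (ht : t ∈ Set.Icc (0:ℝ) 1) : seg a b t ∈ unitCube n := by
  intro i
  obtain ⟨h1, h2⟩ := ha i
  obtain ⟨h3, h4⟩ := hb i
  obtain ⟨h5, h6⟩ := ht
  constructor
  · have : 0 ≤ (1 - t) * a i := mul_nonneg (by linarith) h1
    have : 0 ≤ t * b i := mul_nonneg h5 h3
    simp only [seg]; linarith
  · have : (1 - t) * a i ≤ (1 - t) * 1 := mul_le_mul_of_nonneg_left h2 (by linarith)
    have : t * b i ≤ t * 1 := mul_le_mul_of_nonneg_left h4 h5
    simp only [seg]; nlinarith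

lemma convex_seg {n : ℕ} {S : Set (Fin n → ℝ)} (hS : Convex ℝ S) {x y : Fin n → ℝ}
    (hx : x ∈ S) (hy : y ∈ S) {t : ℝ} (ht : t ∈ Set.Icc (0:ℝ) 1) : seg x y t ∈ S := by
  have h := hS hx hy (by linarith [ht.1, ht.2] : (0:ℝ) ≤ 1 - t) ht.1 (by ring)
  have he : (1 - t) • x + t • y = seg x y t := by
    funext j; simp [seg, Pi.add_apply, Pi.smul_apply, smul_eq_mul]
  rwa [he] at h

lemma poly_closed {n : ℕ} {S : Set (Fin n → ℝ)} (h : IsPolyhedron S) : IsClosed S := by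
  obtain ⟨m, Z, z, rfl⟩ := h
  have h2 : {x : Fin n → ℝ | ∀ i, (∑ j, Z i j * x j) ≤ z i}
      = ⋂ i, {x : Fin n → ℝ | (∑ j, Z i j * x j) ≤ z i} := by
    ext x; simp
  rw [h2]
  refine isClosed_iInter (fun i => ?_)
  exact isClosed_le (by fun_prop) continuous_const

lemma poly_convex {n : ℕ} {S : Set (Fin n → ℝ)} (h : IsPolyhedron S) : Convex ℝ S := by
  obtain ⟨m, Z, z, rfl⟩ := h
  intro x hx y hy s t hs ht hst
  intro i
  have hx' := hx i
  have hy' := hy i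
  have he : (∑ j, Z i j * (s • x + t • y) j)
      = s * (∑ j, Z i j * x j) + t * (∑ j, Z i j * y j) := by
    have hterm : ∀ j, Z i j * (s • x + t • y) j
        = s * (Z i j * x j) + t * (Z i j * y j) := by
      intro j; simp [Pi.add_apply, Pi.smul_apply, smul_eq_mul]; ring
    simp_rw [hterm, Finset.sum_add_distrib, ← Finset.mul_sum]
  show (∑ j, Z i j * (s • x + t • y) j) ≤ z i
  rw [he]
  have hz : s * z i + t * z i = z i := by rw [← add_mul, hst, one_mul]
  nlinarith [mul_le_mul_of_nonneg_left hx' hs, mul_le_mul_of_nonneg_left hy' ht]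

/-- extraction of concrete coefficients from an affine map -/
lemma affine_to_aval {n : ℕ} (φ : (Fin n → ℝ) →ᵃ[ℝ] ℝ) :
    ∃ v β, ∀ y, φ y = aval v β y := by
  classical
  refine ⟨fun j => φ.linear (fun j' => if j = j' then 1 else 0), φ 0, fun y => ?_⟩
  have hdec : φ y = φ.linear y + φ 0 := by
    rw [AffineMap.decomp φ]; simp
  have hy : y = ∑ i, y i • fun j' => if i = j' then (1:ℝ) else 0 := pi_eq_sum_univ y
  rw [hdec]
  conv_lhs => rw [hy]
  rw [map_sum]
  simp_rw [LinearMap.map_smul, smul_eq_mul]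
  simp only [aval]
  congr 1
  apply Finset.sum_congr rfl
  intro j _
  ring

/-- affineMapVec as an affine map -/
noncomputable def amAff {m n : ℕ} (W : Matrix (Fin m) (Fin n) ℝ) (g : Fin m → ℝ) :
    (Fin n → ℝ) →ᵃ[ℝ] (Fin m → ℝ) :=
  AffineMap.mk' (affineMapVec W g) (Matrix.mulVecLin W) 0 (by
    intro p
    funext i
    simp only [affineMapVec, Matrix.mulVecLin_apply, Matrix.mulVec, dotProduct,
      Pi.vadd_apply, vadd_eq_add, vsub_eq_sub, sub_zero, Pi.zero_apply, Pi.add_apply,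
      mul_zero, Finset.sum_const_zero, zero_add])

lemma amAff_apply {m n : ℕ} (W : Matrix (Fin m) (Fin n) ℝ) (g : Fin m → ℝ) (x : Fin n → ℝ) :
    amAff W g x = affineMapVec W g x := rfl

/-- one-sided piece selection -/
lemma exists_left_piece {r : ℕ} (J : Fin r → Set ℝ)
    (hJc : ∀ k, IsClosed (J k))
    (hJconv : ∀ k, ∀ u ∈ J k, ∀ w ∈ J k, ∀ t ∈ Set.Icc (0:ℝ) 1, ((1-t)*u + t*w) ∈ J k)
    (hcov : ∀ t ∈ Set.Icc (0:ℝ) 1, ∃ k, t ∈ J k)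
    (t₀ : ℝ) (ht₀ : t₀ ∈ Set.Ioo (0:ℝ) 1) :
    ∃ k ε, 0 < ε ∧ ∀ t, t₀ - ε ≤ t → t ≤ t₀ → t ∈ J k := by
  classical
  obtain ⟨ht₀0, ht₀1⟩ := ht₀
  have hu : ∀ n : ℕ, (t₀ - t₀ / (n + 2)) ∈ Set.Icc (0:ℝ) 1 := by
    intro n
    have h2 : (0:ℝ) < (n:ℝ) + 2 := by positivity
    have h3 : t₀ / ((n:ℝ) + 2) ≤ t₀ / 1 := by
      apply div_le_div_of_nonneg_left (le_of_lt ht₀0) one_pos (by linarith)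
    have h4 : 0 < t₀ / ((n:ℝ) + 2) := by positivity
    rw [div_one] at h3
    constructor <;> [linarith; linarith]
  choose f hf using fun n : ℕ => hcov (t₀ - t₀ / (n + 2)) (hu n)
  have : Nonempty (Fin r) := by
    obtain ⟨k, _⟩ := hcov t₀ ⟨le_of_lt ht₀0, le_of_lt ht₀1⟩
    exact ⟨k⟩
  obtain ⟨k, hk⟩ := Finite.exists_infinite_fiber f
  have hfiber : (f ⁻¹' {k}).Infinite := Set.infinite_coe_iff.mp hk
  -- t₀ ∈ closure (J k)
  have ht₀J : t₀ ∈ J k := by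
    apply (hJc k).closure_subset
    rw [Metric.mem_closure_iff]
    intro ε hε
    obtain ⟨N, hN⟩ := exists_nat_gt (t₀ / ε)
    obtain ⟨n, hn, hnN⟩ := hfiber.exists_gt N
    refine ⟨t₀ - t₀ / (n + 2), by have h5 := hf n; rwa [show f n = k from hn] at h5, ?_⟩
    have h2 : (0:ℝ) < (n:ℝ) + 2 := by positivity
    have h4 : 0 < t₀ / ((n:ℝ) + 2) := by positivity
    rw [Real.dist_eq, abs_of_pos (by linarith : (0:ℝ) < t₀ - (t₀ - t₀ / (n + 2)))]
    have hNn : (N:ℝ) ≤ (n:ℝ) := by exact_mod_cast le_of_lt hnN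
    have : t₀ / ((n:ℝ) + 2) < ε := by
      rw [div_lt_iff₀ h2]
      have : t₀ / ε < (n:ℝ) + 2 := by linarith
      rw [div_lt_iff₀ hε] at this
      linarith
    linarith
  -- fix a base point
  obtain ⟨n₀, hn₀⟩ := hfiber.nonempty
  have hbase : (t₀ - t₀ / (n₀ + 2)) ∈ J k := by
    have := hf n₀
    rwa [show f n₀ = k from hn₀] at this
  have h2 : (0:ℝ) < (n₀:ℝ) + 2 := by positivity
  have hε : 0 < t₀ / ((n₀:ℝ) + 2) := by positivity
  refine ⟨k, t₀ / (n₀ + 2), hε, fun t hta htb => ?_⟩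
  set u := t₀ - t₀ / (n₀ + 2) with hudef
  have hut : u < t₀ := by simp only [hudef]; linarith
  set s := (t - u) / (t₀ - u) with hsdef
  have hs01 : s ∈ Set.Icc (0:ℝ) 1 := by
    constructor
    · exact div_nonneg (by linarith) (by linarith)
    · rw [div_le_one (by linarith)]; linarith
  have := hJconv k u hbase t₀ ht₀J s hs01
  have heq : (1 - s) * u + s * t₀ = t := by
    have hne : t₀ - u ≠ 0 := by intro hc; rw [sub_eq_zero] at hc; exact absurd hc.symm (ne_of_lt hut)
    have h3 : s * (t₀ - u) = t - u := by rw [hsdef]; field_simp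
    have h4 : (1 - s) * u + s * t₀ = u + s * (t₀ - u) := by ring
    rw [h4, h3]; ring
  rwa [heq] at this

lemma max_mid (x y : ℝ) : max ((x + y)/2) 0 ≤ (max x 0 + max y 0)/2 := by
  apply max_le
  · have h1 := le_max_left x (0:ℝ)
    have h2 := le_max_left y (0:ℝ)
    linarith
  · have h1 := le_max_right x (0:ℝ)
    have h2 := le_max_right y (0:ℝ)
    linarith

lemma core_arith (A1 B1 A2 B2 t s H0 Hm Hp : ℝ)
    (e0 : (1-t)*A1 + t*B1 = (1-t)*A2 + t*B2)
    (h0 : H0 = (1-t)*A1 + t*B1)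
    (hm : Hm = (1-(t-s))*A1 + (t-s)*B1)
    (hp : Hp = (1-(t+s))*A2 + (t+s)*B2) :
    H0 + (max (((1-t)*A1 + t*B1) - ((1-t)*A2 + t*B2)) 0
        + max (((1-t)*A2 + t*B2) - ((1-t)*A1 + t*B1)) 0)
    ≤ ((Hm + (max (((1-(t-s))*A1 + (t-s)*B1) - ((1-(t-s))*A2 + (t-s)*B2)) 0
           + max (((1-(t-s))*A2 + (t-s)*B2) - ((1-(t-s))*A1 + (t-s)*B1)) 0))
      + (Hp + (max (((1-(t+s))*A1 + (t+s)*B1) - ((1-(t+s))*A2 + (t+s)*B2)) 0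
           + max (((1-(t+s))*A2 + (t+s)*B2) - ((1-(t+s))*A1 + (t+s)*B1)) 0))) / 2 := by
  subst h0 hm hp
  rw [show ((1-t)*A1 + t*B1) - ((1-t)*A2 + t*B2) = 0 by rw [e0]; ring,
      show ((1-t)*A2 + t*B2) - ((1-t)*A1 + t*B1) = 0 by rw [e0]; ring]
  simp only [max_self, add_zero]
  rcases le_total (((1-(t-s))*A1 + (t-s)*B1) - ((1-(t-s))*A2 + (t-s)*B2)) 0 with hm1 | hm1 <;>
  rcases le_total (((1-(t+s))*A1 + (t+s)*B1) - ((1-(t+s))*A2 + (t+s)*B2)) 0 with hp1 | hp1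
  · rw [max_eq_right hm1, max_eq_left (by linarith), max_eq_right hp1,
      max_eq_left (by linarith)]
    nlinarith [e0]
  · rw [max_eq_right hm1, max_eq_left (by linarith), max_eq_left hp1,
      max_eq_right (by linarith)]
    nlinarith [e0]
  · rw [max_eq_left hm1, max_eq_right (by linarith), max_eq_right hp1,
      max_eq_left (by linarith)]
    nlinarith [e0]
  · rw [max_eq_left hm1, max_eq_right (by linarith), max_eq_left hp1,
      max_eq_right (by linarith)]
    nlinarith [e0]

noncomputable def qfun {nx r : ℕ} (v : Fin r → Fin nx → ℝ) (d : Fin r → ℝ)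
    (y : Fin nx → ℝ) : ℝ :=
  ∑ z : Fin r × Fin r, max (aval (v z.1) (d z.1) y - aval (v z.2) (d z.2) y) 0

lemma qfun_continuous {nx r : ℕ} (v : Fin r → Fin nx → ℝ) (d : Fin r → ℝ) :
    Continuous (qfun v d) := by
  apply continuous_finset_sum
  intro z _
  exact ((aval_continuous _ _).sub (aval_continuous _ _)).max continuous_const

lemma seg_seg {n : ℕ} (a b : Fin n → ℝ) (u w τ : ℝ) :
    seg (seg a b u) (seg a b w) τ = seg a b ((1-τ)*u + τ*w) := by
  funext j; simp only [seg]; ring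

lemma F_secant {nx r : ℕ} (h : (Fin nx → ℝ) → ℝ)
    (hcont : ContinuousOn h (unitCube nx))
    (C : Fin r → Set (Fin nx → ℝ)) (v : Fin r → Fin nx → ℝ) (d : Fin r → ℝ)
    (hclosed : ∀ k, IsClosed (C k)) (hconv : ∀ k, Convex ℝ (C k))
    (hcover : ∀ y ∈ unitCube nx, ∃ k, y ∈ C k)
    (hagree : ∀ k, ∀ y ∈ C k ∩ unitCube nx, h y = aval (v k) (d k) y) :
    ∀ a ∈ unitCube nx, ∀ b ∈ unitCube nx, ∀ t ∈ Set.Icc (0:ℝ) 1,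
      h (seg a b t) + qfun v d (seg a b t)
        ≤ (1-t) * (h a + qfun v d a) + t * (h b + qfun v d b) := by
  intro a ha b hb t ht
  classical
  have hc : ContinuousOn (fun u => h (seg a b u) + qfun v d (seg a b u)) (Set.Icc 0 1) := by
    apply ContinuousOn.add
    · exact hcont.comp (seg_continuous a b).continuousOn (fun u hu => cube_seg ha hb hu)
    · exact ((qfun_continuous v d).comp (seg_continuous a b)).continuousOn
  have hloc : ∀ t₀ ∈ Set.Ioo (0:ℝ) 1, ∃ ε > 0, ∀ s : ℝ, 0 < s → s ≤ ε →
      t₀ - s ∈ Set.Icc (0:ℝ) 1 → t₀ + s ∈ Set.Icc (0:ℝ) 1 →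
      (h (seg a b t₀) + qfun v d (seg a b t₀))
        ≤ ((h (seg a b (t₀-s)) + qfun v d (seg a b (t₀-s)))
          + (h (seg a b (t₀+s)) + qfun v d (seg a b (t₀+s)))) / 2 := by
    intro t₀ ht₀
    -- left piece
    obtain ⟨i, εL, hεL, hleft⟩ := exists_left_piece
      (fun k => Set.Icc (0:ℝ) 1 ∩ (fun u => seg a b u) ⁻¹' (C k))
      (fun k => IsClosed.inter isClosed_Icc ((hclosed k).preimage (seg_continuous a b)))
      (fun k u hu w hw τ hτ => by
        refine ⟨?_, ?_⟩
        · obtain ⟨hu1, hu2⟩ := hu.1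
          obtain ⟨hw1, hw2⟩ := hw.1
          obtain ⟨hτ1, hτ2⟩ := hτ
          constructor <;> nlinarith
        · have hmem := convex_seg (hconv k) hu.2 hw.2 hτ
          rwa [seg_seg] at hmem)
      (fun u hu => by
        obtain ⟨k, hk⟩ := hcover (seg a b u) (cube_seg ha hb hu)
        exact ⟨k, hu, hk⟩)
      t₀ ht₀
    -- right piece
    obtain ⟨j, εR, hεR, hright'⟩ := exists_left_piece
      (fun k => Set.Icc (0:ℝ) 1 ∩ (fun u => seg a b (1 - u)) ⁻¹' (C k))
      (fun k => IsClosed.inter isClosed_Icc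
        ((hclosed k).preimage ((seg_continuous a b).comp (by fun_prop))))
      (fun k u hu w hw τ hτ => by
        refine ⟨?_, ?_⟩
        · obtain ⟨hu1, hu2⟩ := hu.1
          obtain ⟨hw1, hw2⟩ := hw.1
          obtain ⟨hτ1, hτ2⟩ := hτ
          constructor <;> nlinarith
        · have hmem := convex_seg (hconv k) hu.2 hw.2 hτ
          rw [seg_seg] at hmem
          have harg : (1-τ) * (1-u) + τ * (1-w) = 1 - ((1-τ)*u + τ*w) := by ring
          rwa [harg] at hmem)
      (fun u hu => by
        have hu' : 1 - u ∈ Set.Icc (0:ℝ) 1 := ⟨by linarith [hu.2], by linarith [hu.1]⟩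
        obtain ⟨k, hk⟩ := hcover (seg a b (1-u)) (cube_seg ha hb hu')
        exact ⟨k, hu, hk⟩)
      (1 - t₀) ⟨by linarith [ht₀.2], by linarith [ht₀.1]⟩
    have hright : ∀ u, t₀ ≤ u → u ≤ t₀ + εR → u ∈ Set.Icc (0:ℝ) 1 → seg a b u ∈ C j := by
      intro u h1 h2 hu
      have h3 := hright' (1 - u) (by linarith) (by linarith)
      have h4 := h3.2
      simp only [Set.mem_preimage] at h4
      rwa [sub_sub_cancel] at h4
    refine ⟨min εL εR, lt_min hεL hεR, fun s hs0 hsε hm1 hm2 => ?_⟩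
    have hsL : s ≤ εL := le_trans hsε (min_le_left _ _)
    have hsR : s ≤ εR := le_trans hsε (min_le_right _ _)
    have ht₀Icc : t₀ ∈ Set.Icc (0:ℝ) 1 := ⟨le_of_lt ht₀.1, le_of_lt ht₀.2⟩
    -- h agreement facts
    have hLmem : ∀ u, t₀ - s ≤ u → u ≤ t₀ → h (seg a b u) = aval (v i) (d i) (seg a b u) := by
      intro u h1 h2
      have h3 := hleft u (by linarith) h2
      exact hagree i _ ⟨h3.2, cube_seg ha hb h3.1⟩
    have hRmem : ∀ u, t₀ ≤ u → u ≤ t₀ + s → h (seg a b u) = aval (v j) (d j) (seg a b u) := by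
      intro u h1 h2
      have huIcc : u ∈ Set.Icc (0:ℝ) 1 := ⟨by linarith [ht₀Icc.1], by linarith [hm2.2]⟩
      have h3 := hright u h1 (by linarith) huIcc
      exact hagree j _ ⟨h3, cube_seg ha hb huIcc⟩
    have h0i : h (seg a b t₀) = aval (v i) (d i) (seg a b t₀) := hLmem t₀ (by linarith) le_rfl
    have h0j : h (seg a b t₀) = aval (v j) (d j) (seg a b t₀) := hRmem t₀ le_rfl (by linarith)
    have hhm : h (seg a b (t₀ - s)) = aval (v i) (d i) (seg a b (t₀ - s)) :=
      hLmem _ le_rfl (by linarith)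
    have hhp : h (seg a b (t₀ + s)) = aval (v j) (d j) (seg a b (t₀ + s)) :=
      hRmem _ (by linarith) le_rfl
    -- notation for endpoint values
    by_cases hij : i = j
    · -- single affine piece across t₀
      subst hij
      have hhe : h (seg a b t₀) = (h (seg a b (t₀ - s)) + h (seg a b (t₀ + s))) / 2 := by
        rw [h0i, hhm, hhp, aval_seg, aval_seg, aval_seg]
        ring
      have hsum : qfun v d (seg a b t₀)
          ≤ (qfun v d (seg a b (t₀ - s)) + qfun v d (seg a b (t₀ + s))) / 2 := by
        unfold qfun
        rw [← Finset.sum_add_distrib, Finset.sum_div]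
        apply Finset.sum_le_sum
        intro z _
        rw [aval_seg, aval_seg, aval_seg, aval_seg, aval_seg, aval_seg]
        rw [show ((1-t₀) * aval (v z.1) (d z.1) a + t₀ * aval (v z.1) (d z.1) b)
              - ((1-t₀) * aval (v z.2) (d z.2) a + t₀ * aval (v z.2) (d z.2) b)
            = ((((1-(t₀-s)) * aval (v z.1) (d z.1) a + (t₀-s) * aval (v z.1) (d z.1) b)
              - ((1-(t₀-s)) * aval (v z.2) (d z.2) a + (t₀-s) * aval (v z.2) (d z.2) b))
              + (((1-(t₀+s)) * aval (v z.1) (d z.1) a + (t₀+s) * aval (v z.1) (d z.1) b)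
              - ((1-(t₀+s)) * aval (v z.2) (d z.2) a + (t₀+s) * aval (v z.2) (d z.2) b))) / 2
          by ring]
        exact max_mid _ _
      linarith
    · -- two distinct pieces: extract the pair (i,j) and (j,i)
      have hij' : ((j, i) : Fin r × Fin r) ∈ (Finset.univ.erase (i, j)) := by
        apply Finset.mem_erase.mpr
        exact ⟨by simp [Prod.ext_iff]; intro hji; exact fun h' => hij (hji ▸ rfl), Finset.mem_univ _⟩
      have hsplit : ∀ y : Fin nx → ℝ, qfun v d y
          = (max (aval (v i) (d i) y - aval (v j) (d j) y) 0
            + max (aval (v j) (d j) y - aval (v i) (d i) y) 0)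
            + ∑ z ∈ ((Finset.univ.erase (i, j)).erase (j, i)),
                max (aval (v z.1) (d z.1) y - aval (v z.2) (d z.2) y) 0 := by
        intro y
        unfold qfun
        rw [← Finset.add_sum_erase _ _ (Finset.mem_univ (i, j)),
            ← Finset.add_sum_erase _ _ hij']
        ring
      rw [hsplit, hsplit, hsplit]
      -- rest terms
      have hrest : (∑ z ∈ ((Finset.univ.erase (i, j)).erase (j, i)),
            max (aval (v z.1) (d z.1) (seg a b t₀) - aval (v z.2) (d z.2) (seg a b t₀)) 0)
          ≤ ((∑ z ∈ ((Finset.univ.erase (i, j)).erase (j, i)),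
              max (aval (v z.1) (d z.1) (seg a b (t₀-s)) - aval (v z.2) (d z.2) (seg a b (t₀-s))) 0)
            + (∑ z ∈ ((Finset.univ.erase (i, j)).erase (j, i)),
              max (aval (v z.1) (d z.1) (seg a b (t₀+s)) - aval (v z.2) (d z.2) (seg a b (t₀+s))) 0)) / 2 := by
        rw [← Finset.sum_add_distrib, Finset.sum_div]
        apply Finset.sum_le_sum
        intro z _
        rw [aval_seg, aval_seg, aval_seg, aval_seg, aval_seg, aval_seg]
        rw [show ((1-t₀) * aval (v z.1) (d z.1) a + t₀ * aval (v z.1) (d z.1) b)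
              - ((1-t₀) * aval (v z.2) (d z.2) a + t₀ * aval (v z.2) (d z.2) b)
            = ((((1-(t₀-s)) * aval (v z.1) (d z.1) a + (t₀-s) * aval (v z.1) (d z.1) b)
              - ((1-(t₀-s)) * aval (v z.2) (d z.2) a + (t₀-s) * aval (v z.2) (d z.2) b))
              + (((1-(t₀+s)) * aval (v z.1) (d z.1) a + (t₀+s) * aval (v z.1) (d z.1) b)
              - ((1-(t₀+s)) * aval (v z.2) (d z.2) a + (t₀+s) * aval (v z.2) (d z.2) b))) / 2
          by ring]
        exact max_mid _ _
      -- core part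
      have e0 : (1-t₀) * aval (v i) (d i) a + t₀ * aval (v i) (d i) b
          = (1-t₀) * aval (v j) (d j) a + t₀ * aval (v j) (d j) b := by
        have := h0i.symm.trans h0j
        rwa [aval_seg, aval_seg] at this
      have h0' : h (seg a b t₀) = (1-t₀) * aval (v i) (d i) a + t₀ * aval (v i) (d i) b := by
        rw [h0i, aval_seg]
      have hm' : h (seg a b (t₀-s))
          = (1-(t₀-s)) * aval (v i) (d i) a + (t₀-s) * aval (v i) (d i) b := by
        rw [hhm, aval_seg]
      have hp' : h (seg a b (t₀+s))
          = (1-(t₀+s)) * aval (v j) (d j) a + (t₀+s) * aval (v j) (d j) b := by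
        rw [hhp, aval_seg]
      have hcore := core_arith (aval (v i) (d i) a) (aval (v i) (d i) b)
        (aval (v j) (d j) a) (aval (v j) (d j) b) t₀ s
        (h (seg a b t₀)) (h (seg a b (t₀-s))) (h (seg a b (t₀+s))) e0 h0' hm' hp'
      -- rewrite the pair maxes in the goal through aval_seg
      simp only [aval_seg]
      simp only [aval_seg] at hcore hrest
      linarith
  have main := secant_of_local_midpoint (fun u => h (seg a b u) + qfun v d (seg a b u))
    hc hloc t ht
  simp only [seg_zero, seg_one] at main
  exact main

lemma aval_add {n : ℕ} (v w : Fin n → ℝ) (β γ : ℝ) (y : Fin n → ℝ) :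
    aval (v + w) (β + γ) y = aval v β y + aval w γ y := by
  simp only [aval, Pi.add_apply, add_mul, Finset.sum_add_distrib]
  ring

lemma aval_sub {n : ℕ} (v w : Fin n → ℝ) (β γ : ℝ) (y : Fin n → ℝ) :
    aval (v - w) (β - γ) y = aval v β y - aval w γ y := by
  simp only [aval, Pi.sub_apply, sub_mul, Finset.sum_sub_distrib]
  ring

lemma aval_zero {n : ℕ} (y : Fin n → ℝ) : aval 0 0 y = 0 := by
  simp [aval]

lemma aval_finsum {n : ℕ} {ι : Type*} (s : Finset ι) (V : ι → Fin n → ℝ) (B : ι → ℝ)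
    (y : Fin n → ℝ) :
    aval (∑ i ∈ s, V i) (∑ i ∈ s, B i) y = ∑ i ∈ s, aval (V i) (B i) y := by
  simp only [aval, Finset.sum_apply, Finset.sum_mul]
  rw [Finset.sum_comm, ← Finset.sum_add_distrib]

lemma cont_sup' {n : ℕ} {ι : Type*} (s : Finset ι) (f : ι → (Fin n → ℝ) → ℝ)
    (hf : ∀ i, Continuous (f i)) :
    ∀ (hs : s.Nonempty), Continuous (fun y => s.sup' hs (fun i => f i y)) := by
  induction s using Finset.cons_induction with
  | empty => intro hs; exact absurd hs (by simp)
  | cons a s ha ih =>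
    intro hs
    rcases s.eq_empty_or_nonempty with rfl | hs'
    · simpa using hf a
    · have he : (fun y => (Finset.cons a s ha).sup' hs (fun i => f i y))
          = fun y => max (f a y) (s.sup' hs' (fun i => f i y)) := by
        funext y
        rw [Finset.sup'_cons hs']
      rw [he]
      exact (hf a).max (ih hs')

lemma component_repr {nx r : ℕ} (h : (Fin nx → ℝ) → ℝ)
    (hcont : ContinuousOn h (unitCube nx))
    (C : Fin r → Set (Fin nx → ℝ)) (v : Fin r → Fin nx → ℝ) (d : Fin r → ℝ)
    (hclosed : ∀ k, IsClosed (C k)) (hconv : ∀ k, Convex ℝ (C k))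
    (hcover : ∀ y ∈ unitCube nx, ∃ k, y ∈ C k)
    (hagree : ∀ k, ∀ y ∈ C k ∩ unitCube nx, h y = aval (v k) (d k) y) :
    ∃ (N₁ N₂ : ℕ) (_ : 1 ≤ N₁) (_ : 1 ≤ N₂)
      (p₁ : ReLUNetParams nx 1 (nx + 1) N₁) (p₂ : ReLUNetParams nx 1 (nx + 1) N₂),
      ∀ y ∈ unitCube nx, h y = p₁.eval y 0 - p₂.eval y 0 := by
  classical
  -- σ-candidates representing qfun
  set qv : ((Fin r × Fin r) → Bool) → Fin nx → ℝ :=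
    fun σ => ∑ z : Fin r × Fin r, (if σ z then v z.1 - v z.2 else 0) with hqvdef
  set qd : ((Fin r × Fin r) → Bool) → ℝ :=
    fun σ => ∑ z : Fin r × Fin r, (if σ z then d z.1 - d z.2 else 0) with hqddef
  have hqv_eval : ∀ σ y, aval (qv σ) (qd σ) y
      = ∑ z : Fin r × Fin r,
          (if σ z then aval (v z.1) (d z.1) y - aval (v z.2) (d z.2) y else 0) := by
    intro σ y
    rw [hqvdef, hqddef]
    simp only
    rw [aval_finsum]
    apply Finset.sum_congr rfl
    intro z _
    split_ifs with hσ
    · exact aval_sub _ _ _ _ _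
    · exact aval_zero _
  have hq_ub : ∀ σ y, aval (qv σ) (qd σ) y ≤ qfun v d y := by
    intro σ y
    rw [hqv_eval]
    unfold qfun
    apply Finset.sum_le_sum
    intro z _
    split_ifs with hσ
    · exact le_max_left _ _
    · exact le_max_right _ _
  have hq_att : ∀ y, aval (qv (fun z => decide (aval (v z.2) (d z.2) y ≤ aval (v z.1) (d z.1) y)))
      (qd (fun z => decide (aval (v z.2) (d z.2) y ≤ aval (v z.1) (d z.1) y))) y
      = qfun v d y := by
    intro y
    rw [hqv_eval]
    unfold qfun
    apply Finset.sum_congr rfl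
    intro z _
    by_cases hle : aval (v z.2) (d z.2) y ≤ aval (v z.1) (d z.1) y
    · rw [if_pos (by simpa using hle), max_eq_left (by linarith)]
    · rw [if_neg (by simpa using hle), max_eq_right (by linarith [le_of_not_ge hle])]
  -- full candidates
  set cv : (Fin r × ((Fin r × Fin r) → Bool)) → Fin nx → ℝ :=
    fun c => v c.1 + qv c.2 with hcvdef
  set cd : (Fin r × ((Fin r × Fin r) → Bool)) → ℝ := fun c => d c.1 + qd c.2 with hcddef
  have hcv_eval : ∀ c y, aval (cv c) (cd c) y
      = aval (v c.1) (d c.1) y + aval (qv c.2) (qd c.2) y := by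
    intro c y
    rw [hcvdef, hcddef]
    exact aval_add _ _ _ _ _
  -- dominated candidates
  set T : Set (Fin r × ((Fin r × Fin r) → Bool)) :=
    {c | ∀ y ∈ unitCube nx, aval (cv c) (cd c) y ≤ h y + qfun v d y} with hTdef
  -- cells
  set W : (Fin r × ((Fin r × Fin r) → Bool)) → Set (Fin nx → ℝ) :=
    fun c => C c.1 ∩ ⋂ z : Fin r × Fin r,
      (if c.2 z then {y | aval (v z.2) (d z.2) y ≤ aval (v z.1) (d z.1) y}
        else {y | aval (v z.1) (d z.1) y ≤ aval (v z.2) (d z.2) y}) with hWdef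
  have hWclosed : ∀ c, IsClosed (W c) := by
    intro c
    apply (hclosed c.1).inter
    apply isClosed_iInter
    intro z
    split_ifs with hb
    · exact isClosed_le (aval_continuous _ _) (aval_continuous _ _)
    · exact isClosed_le (aval_continuous _ _) (aval_continuous _ _)
  have hWF : ∀ c, ∀ y, y ∈ W c → y ∈ unitCube nx →
      h y + qfun v d y = aval (cv c) (cd c) y := by
    intro c y hyW hyc
    rw [hcv_eval, hqv_eval]
    have h1 : h y = aval (v c.1) (d c.1) y := hagree c.1 y ⟨hyW.1, hyc⟩
    have h2 : qfun v d y = ∑ z : Fin r × Fin r,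
        (if c.2 z then aval (v z.1) (d z.1) y - aval (v z.2) (d z.2) y else 0) := by
      unfold qfun
      apply Finset.sum_congr rfl
      intro z _
      have hyz := Set.mem_iInter.mp hyW.2 z
      by_cases hb : c.2 z
      · rw [if_pos hb]
        rw [if_pos hb] at hyz
        exact max_eq_left (by have := hyz; simp only [Set.mem_setOf_eq] at this; linarith)
      · rw [if_neg hb]
        rw [if_neg hb] at hyz
        exact max_eq_right (by have := hyz; simp only [Set.mem_setOf_eq] at this; linarith)
    rw [h1, h2]
  have hWcov : ∀ y ∈ unitCube nx, ∃ c, y ∈ W c := by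
    intro y hy
    obtain ⟨k, hk⟩ := hcover y hy
    refine ⟨(k, fun z => decide (aval (v z.2) (d z.2) y ≤ aval (v z.1) (d z.1) y)), hk, ?_⟩
    apply Set.mem_iInter.mpr
    intro z
    by_cases hle : aval (v z.2) (d z.2) y ≤ aval (v z.1) (d z.1) y
    · rw [if_pos (by simpa using hle)]; exact hle
    · rw [if_neg (by simpa using hle)]; exact le_of_not_ge hle
  -- Baire category on the cube
  haveI : CompleteSpace ↥(unitCube nx) := (cube_closed nx).completeSpace_coe
  haveI : Nonempty ↥(unitCube nx) := ⟨⟨_, cube_nonempty nx⟩⟩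
  have hdense : Dense (⋃ c, interior (Subtype.val ⁻¹' W c : Set ↥(unitCube nx))) := by
    apply dense_iUnion_interior_of_closed
    · exact fun c => (hWclosed c).preimage continuous_subtype_val
    · ext p
      simp only [Set.mem_iUnion, Set.mem_univ, iff_true, Set.mem_preimage]
      exact hWcov p.1 p.2
  -- touching lemma
  have htouch : ∀ (c : Fin r × ((Fin r × Fin r) → Bool)) (z : ↥(unitCube nx)),
      z ∈ interior (Subtype.val ⁻¹' W c : Set ↥(unitCube nx)) →
      (c ∈ T ∧ h z.1 + qfun v d z.1 = aval (cv c) (cd c) z.1) := by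
    intro c z hz
    obtain ⟨ρ, hρ, hball⟩ := Metric.isOpen_iff.mp isOpen_interior z hz
    have hnb : ∀ y (hy : y ∈ unitCube nx), dist y z.1 < ρ → y ∈ W c := by
      intro y hy hd
      have hmem : (⟨y, hy⟩ : ↥(unitCube nx)) ∈ Metric.ball z ρ := by
        rw [Metric.mem_ball, Subtype.dist_eq]
        exact hd
      have h5 : (⟨y, hy⟩ : ↥(unitCube nx)) ∈ (Subtype.val ⁻¹' W c : Set ↥(unitCube nx)) :=
        interior_subset (hball hmem)
      exact Set.mem_preimage.mp h5
    have hFz : h z.1 + qfun v d z.1 = aval (cv c) (cd c) z.1 :=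
      hWF c z.1 (hnb z.1 z.2 (by rw [dist_self]; exact hρ)) z.2
    refine ⟨?_, hFz⟩
    intro w hw
    set D := dist w z.1 with hDdef
    have hD0 : 0 ≤ D := dist_nonneg
    set t := min 1 (ρ / (2 * (D + 1))) with htdef
    have ht0 : 0 < t := lt_min one_pos (by positivity)
    have ht1 : t ≤ 1 := min_le_left _ _
    have htIcc : t ∈ Set.Icc (0:ℝ) 1 := ⟨le_of_lt ht0, ht1⟩
    have hsegcube : seg z.1 w t ∈ unitCube nx := cube_seg z.2 hw htIcc
    have hdistseg : dist (seg z.1 w t) z.1 < ρ := by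
      have he : seg z.1 w t - z.1 = t • (w - z.1) := by
        funext j; simp [seg, Pi.smul_apply, smul_eq_mul]; ring
      rw [dist_eq_norm, he, norm_smul]
      have hnw : ‖w - z.1‖ = D := by rw [hDdef, dist_eq_norm]
      rw [hnw, Real.norm_eq_abs, abs_of_pos ht0]
      have ht2 : t ≤ ρ / (2 * (D + 1)) := min_le_right _ _
      have h3 : t * D ≤ (ρ / (2 * (D + 1))) * D := mul_le_mul_of_nonneg_right ht2 hD0
      have h4 : (ρ / (2 * (D + 1))) * D < ρ := by
        rw [div_mul_eq_mul_div, div_lt_iff₀ (by positivity)]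
        nlinarith
      linarith
    have hsegW : seg z.1 w t ∈ W c := hnb _ hsegcube hdistseg
    have hFseg : h (seg z.1 w t) + qfun v d (seg z.1 w t)
        = aval (cv c) (cd c) (seg z.1 w t) := hWF c _ hsegW hsegcube
    have hsec := F_secant h hcont C v d hclosed hconv hcover hagree
      z.1 z.2 w hw t htIcc
    rw [hFseg] at hsec
    rw [aval_seg] at hsec
    rw [← hFz] at hsec
    have := hsec
    nlinarith [this]
  -- the finite set of dominated candidates
  have hTfin : T.Finite := Set.toFinite T
  -- a good point exists
  obtain ⟨z₀, hz₀⟩ := hdense.nonempty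
  obtain ⟨c₀, hc₀⟩ := Set.mem_iUnion.mp hz₀
  have hc₀T : c₀ ∈ T := (htouch c₀ z₀ hc₀).1
  have hTFne : hTfin.toFinset.Nonempty := ⟨c₀, hTfin.mem_toFinset.mpr hc₀T⟩
  -- F agrees with the max of dominated candidates on the cube
  have hFcont : ContinuousOn (fun y => h y + qfun v d y) (unitCube nx) :=
    hcont.add (qfun_continuous v d).continuousOn
  have hGcont : Continuous (fun y => hTfin.toFinset.sup' hTFne
      (fun c => aval (cv c) (cd c) y)) :=
    cont_sup' _ _ (fun c => aval_continuous _ _) hTFne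
  have hFG : ∀ y ∈ unitCube nx, h y + qfun v d y
      = hTfin.toFinset.sup' hTFne (fun c => aval (cv c) (cd c) y) := by
    intro y hy
    apply le_antisymm
    · -- F ≤ G via density
      have hkey : ∀ ε > 0, h y + qfun v d y
          < hTfin.toFinset.sup' hTFne (fun c => aval (cv c) (cd c) y) + ε := by
        intro ε hε
        obtain ⟨δ₁, hδ₁, hδ₁p⟩ := Metric.continuousWithinAt_iff.mp (hFcont y hy) (ε/2)
          (by linarith)
        obtain ⟨δ₂, hδ₂, hδ₂p⟩ := Metric.continuousAt_iff.mp hGcont.continuousAt (ε/2)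
          (by linarith)
        obtain ⟨z, hzmem, hzdist⟩ := hdense.exists_dist_lt (⟨y, hy⟩ : ↥(unitCube nx))
          (show (0:ℝ) < min δ₁ δ₂ from lt_min hδ₁ hδ₂)
        obtain ⟨c, hc⟩ := Set.mem_iUnion.mp hzmem
        obtain ⟨hcT, hcz⟩ := htouch c z hc
        have hdyz : dist z.1 y < min δ₁ δ₂ := by
          have h0 := hzdist
          rw [Subtype.dist_eq] at h0
          rw [dist_comm]
          exact h0
        have h1 : dist (h z.1 + qfun v d z.1) (h y + qfun v d y) < ε/2 :=
          hδ₁p z.2 (lt_of_lt_of_le hdyz (min_le_left _ _))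
        have h2 : dist (hTfin.toFinset.sup' hTFne (fun c => aval (cv c) (cd c) z.1))
            (hTfin.toFinset.sup' hTFne (fun c => aval (cv c) (cd c) y)) < ε/2 :=
          hδ₂p (lt_of_lt_of_le hdyz (min_le_right _ _))
        have h3 : aval (cv c) (cd c) z.1
            ≤ hTfin.toFinset.sup' hTFne (fun c => aval (cv c) (cd c) z.1) :=
          Finset.le_sup' (fun c => aval (cv c) (cd c) z.1) (hTfin.mem_toFinset.mpr hcT)
        rw [Real.dist_eq, abs_lt] at h1 h2
        linarith [h1.1, h1.2, h2.1, h2.2, hcz ▸ h3]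
      by_contra hcon
      push_neg at hcon
      have := hkey ((h y + qfun v d y)
        - hTfin.toFinset.sup' hTFne (fun c => aval (cv c) (cd c) y)) (by linarith)
      linarith
    · -- G ≤ F since all candidates dominated
      apply Finset.sup'_le
      intro c hc
      exact (hTfin.mem_toFinset.mp hc) y hy
  -- build the networks
  set N₁ := hTfin.toFinset.card with hN₁def
  have hN₁pos : 1 ≤ N₁ := hTFne.card_pos
  set e₁ := hTfin.toFinset.equivFin with he₁def
  have hp₁ := relu_net_max N₁ hN₁pos (fun m => cv (e₁.symm m).1) (fun m => cd (e₁.symm m).1)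
  have hNE2 : Nonempty ((Fin r × Fin r) → Bool) := ⟨fun _ => false⟩
  set N₂ := Fintype.card ((Fin r × Fin r) → Bool) with hN₂def
  have hN₂pos : 1 ≤ N₂ := Fintype.card_pos
  set e₂ := (Fintype.equivFin ((Fin r × Fin r) → Bool)).symm with he₂def
  have hp₂ := relu_net_max N₂ hN₂pos (fun m => qv (e₂ m)) (fun m => qd (e₂ m))
  refine ⟨N₁, N₂, hN₁pos, hN₂pos, netP N₁ hN₁pos (fun m => cv (e₁.symm m).1) (fun m => cd (e₁.symm m).1), netP N₂ hN₂pos (fun m => qv (e₂ m)) (fun m => qd (e₂ m)), ?_⟩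
  intro y hy
  have hy0 : ∀ j, 0 ≤ y j := fun j => (hy j).1
  rw [hp₁ y hy0, hp₂ y hy0]
  -- reindex the sups
  have hsup1 : Finset.univ.sup' ⟨⟨0, by omega⟩, Finset.mem_univ _⟩
      (fun m => aval (cv (e₁.symm m).1) (cd (e₁.symm m).1) y)
      = hTfin.toFinset.sup' hTFne (fun c => aval (cv c) (cd c) y) := by
    apply le_antisymm
    · apply Finset.sup'_le
      intro m _
      exact Finset.le_sup' (fun c => aval (cv c) (cd c) y) (e₁.symm m).2
    · apply Finset.sup'_le
      intro c hc
      have hre : aval (cv c) (cd c) y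
          = aval (cv (e₁.symm (e₁ ⟨c, hc⟩)).1) (cd (e₁.symm (e₁ ⟨c, hc⟩)).1) y := by
        rw [Equiv.symm_apply_apply]
      rw [hre]
      exact Finset.le_sup' (fun m => aval (cv (e₁.symm m).1) (cd (e₁.symm m).1) y)
        (Finset.mem_univ (e₁ ⟨c, hc⟩))
  have hsup2 : Finset.univ.sup' ⟨⟨0, by omega⟩, Finset.mem_univ _⟩
      (fun m => aval (qv (e₂ m)) (qd (e₂ m)) y) = qfun v d y := by
    apply le_antisymm
    · apply Finset.sup'_le
      intro m _
      exact hq_ub _ y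
    · have hatt := hq_att y
      rw [← hatt]
      have hre : aval (qv (fun z => decide (aval (v z.2) (d z.2) y ≤ aval (v z.1) (d z.1) y)))
            (qd (fun z => decide (aval (v z.2) (d z.2) y ≤ aval (v z.1) (d z.1) y))) y
          = aval (qv (e₂ (e₂.symm (fun z => decide (aval (v z.2) (d z.2) y ≤ aval (v z.1) (d z.1) y)))))
            (qd (e₂ (e₂.symm (fun z => decide (aval (v z.2) (d z.2) y ≤ aval (v z.1) (d z.1) y))))) y := by
        rw [Equiv.apply_symm_apply]
      rw [hre]
      exact Finset.le_sup' (fun m => aval (qv (e₂ m)) (qd (e₂ m)) y) (Finset.mem_univ _)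
  rw [hsup1, hsup2]
  have := hFG y hy
  linarith

end
end MPCProof

open MPCProof in
/-- a continuous PWA map on a bounded polytopic set, transformable by
invertible affine maps to a nonnegative map on the unit cube, is exactly represented by the
two affine transformations and `2 nu` ReLU networks of width `nx + 1`. -/
theorem mpc_law_exact_relu_representation_affine (nx nu : ℕ) (RΩ : Set (Fin nx → ℝ))
    (hpoly : IsPolyhedron RΩ) (hbdd : Bornology.IsBounded RΩ)
    (K : (Fin nx → ℝ) → Fin nu → ℝ)
    (hcont : ContinuousOn K RΩ) (hpwa : IsPWAOn RΩ K)
    (Ax : (Fin nx → ℝ) ≃ᵃ[ℝ] (Fin nx → ℝ))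
    (Au : (Fin nu → ℝ) ≃ᵃ[ℝ] (Fin nu → ℝ))
    (hAx : Ax '' RΩ = unitCube nx)
    (hnonneg : ∀ y ∈ unitCube nx, ∀ i, 0 ≤ Au (K (Ax.symm y)) i) :
    ∃ (rγ rη : Fin nu → ℕ), (∀ i, 1 ≤ rγ i) ∧ (∀ i, 1 ≤ rη i) ∧
      ∃ (θγ : ∀ i, ReLUNetParams nx 1 (nx + 1) (rγ i))
        (θη : ∀ i, ReLUNetParams nx 1 (nx + 1) (rη i)),
        ∀ x ∈ RΩ,
          K x = Au.symm (fun i => (θγ i).eval (Ax x) 0 - (θη i).eval (Ax x) 0) := by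
  classical
  obtain ⟨r, R, KM, g, hRpoly, hRdisj, hRunion, hRaffine⟩ := hpwa
  have hAxsymm_cont : Continuous (Ax.symm : (Fin nx → ℝ) → (Fin nx → ℝ)) :=
    Ax.symm.continuous_of_finiteDimensional
  set C : Fin r → Set (Fin nx → ℝ) := fun k => Ax '' (R k) with hCdef
  have hCim : ∀ (S : Set (Fin nx → ℝ)), Ax '' S = (Ax.symm : (Fin nx → ℝ) → _) ⁻¹' S := by
    intro S; ext y
    constructor
    · rintro ⟨x, hx, rfl⟩
      simpa using hx
    · intro hy
      exact ⟨Ax.symm y, hy, by simp⟩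
  have hCclosed : ∀ k, IsClosed (C k) := by
    intro k
    rw [hCdef]
    simp only
    rw [hCim]
    exact (poly_closed (hRpoly k)).preimage hAxsymm_cont
  have hCconv : ∀ k, Convex ℝ (C k) := by
    intro k
    have h1 := Convex.affine_image Ax.toAffineMap (poly_convex (hRpoly k))
    have h2 : (Ax.toAffineMap : (Fin nx → ℝ) → _) '' (R k) = Ax '' (R k) := rfl
    rw [h2] at h1
    exact h1
  have hCcover : ∀ y ∈ unitCube nx, ∃ k, y ∈ C k := by
    intro y hy
    have h1 : y ∈ Ax '' RΩ := by rw [hAx]; exact hy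
    obtain ⟨x, hxΩ, rfl⟩ := h1
    rw [← hRunion] at hxΩ
    obtain ⟨k, hk⟩ := Set.mem_iUnion.mp hxΩ
    exact ⟨k, Set.mem_image_of_mem _ hk⟩
  set hfun : Fin nu → (Fin nx → ℝ) → ℝ := fun i y => Au (K (Ax.symm y)) i with hfundef
  have hdata : ∀ (i : Fin nu) (k : Fin r), ∃ vk dk, ∀ y : Fin nx → ℝ,
      Au (affineMapVec (KM k) (g k) (Ax.symm y)) i = aval vk dk y := by
    intro i k
    obtain ⟨vk, dk, hvk⟩ := affine_to_aval
      (((LinearMap.proj i : ((Fin nu) → ℝ) →ₗ[ℝ] ℝ).toAffineMap).comp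
        ((Au.toAffineMap).comp ((amAff (KM k) (g k)).comp (Ax.symm.toAffineMap))))
    refine ⟨vk, dk, fun y => ?_⟩
    have h2 := hvk y
    simpa only [AffineMap.comp_apply, LinearMap.coe_toAffineMap, LinearMap.proj_apply,
      AffineEquiv.coe_toAffineMap, amAff_apply] using h2
  choose vv dd hvd using hdata
  have hagree : ∀ (i : Fin nu) (k : Fin r), ∀ y ∈ C k ∩ unitCube nx,
      hfun i y = aval (vv i k) (dd i k) y := by
    intro i k y hy
    obtain ⟨x, hxk, rfl⟩ := hy.1
    have h3 := hvd i k (Ax x)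
    rw [show Ax.symm (Ax x) = x from Ax.symm_apply_apply x] at h3
    rw [hfundef]
    simp only
    rw [show Ax.symm (Ax x) = x from Ax.symm_apply_apply x, hRaffine k x hxk]
    exact h3
  have hconti : ∀ i, ContinuousOn (hfun i) (unitCube nx) := by
    intro i
    have h1 : ContinuousOn (fun y => K (Ax.symm y)) (unitCube nx) := by
      apply hcont.comp hAxsymm_cont.continuousOn
      intro y hy
      have h2 : y ∈ Ax '' RΩ := by rw [hAx]; exact hy
      obtain ⟨x, hx, rfl⟩ := h2
      rw [Ax.symm_apply_apply]
      exact hx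
    have h2 : Continuous (fun w : Fin nu → ℝ => Au w i) :=
      (continuous_apply i).comp Au.continuous_of_finiteDimensional
    exact h2.comp_continuousOn h1
  have hrep := fun i => component_repr (hfun i) (hconti i) C (vv i) (dd i)
    hCclosed hCconv hCcover (hagree i)
  choose N₁ N₂ hN₁ hN₂ p₁ p₂ hrepr using hrep
  refine ⟨N₁, N₂, hN₁, hN₂, p₁, p₂, ?_⟩
  intro x hx
  have hyc : Ax x ∈ unitCube nx := by rw [← hAx]; exact ⟨x, hx, rfl⟩
  have hthis : (fun i => (p₁ i).eval (Ax x) 0 - (p₂ i).eval (Ax x) 0) = Au (K x) := by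
    funext i
    rw [← hrepr i (Ax x) hyc]
    show Au (K (Ax.symm (Ax x))) i = Au (K x) i
    rw [Ax.symm_apply_apply]
  rw [hthis, Au.symm_apply_apply]
end
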